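/- arXiv:2311.08003 — 3 statements merged into one kernel-verified Lean document; each statement's English description precedes it below -/
import Mathlib

section
/- Let (Q,R) be a gentle presentation. The graded vector space k(Γ∥B), with degree-m component freely spanned by Γ_m∥B and maps d^m(γ,α) = Σ_{b arrow, (bγ,bα)∈Γ_{m+1}∥B} (bγ,bα) − (−1)^m Σ_{a arrow, (γa,αa)∈Γ_{m+1}∥B} (γa,αa), is a cochain complex; that is, d^{m+1} ∘ d^m = 0 for all m ≥ 0. -/
/-!
Common framework: quivers, paths (as a start vertex together with a list of
composable arrows, listed in order of traversal, so that the paper's path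
`c_m ⋯ c_1` corresponds to the list `[c_1, …, c_m]`), gentle and quadratic
monomial presentations, the cochain complex `k(Γ ∥ B)` and the chain complex
`k(B ⊙ Γ)` of the paper.
-/

namespace GentleTT

structure Quiv where
  V : Type
  A : Type
  [fintV : Fintype V]
  [fintA : Fintype A]
  [decV : DecidableEq V]
  [decA : DecidableEq A]
  src : A → V
  tgt : A → V

attribute [instance] Quiv.fintV Quiv.fintA Quiv.decV Quiv.decA

/-- A "path datum": a start vertex together with the list of arrows traversed. -/
abbrev PathDat (Q : Quiv) := Q.V × List Q.A

def psrc (Q : Quiv) (p : PathDat Q) : Q.V := p.1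

def ptgt (Q : Quiv) (p : PathDat Q) : Q.V := p.2.getLast?.elim p.1 Q.tgt

def plen (Q : Quiv) (p : PathDat Q) : ℕ := p.2.length

/-- `p` is a genuine path: consecutive arrows compose, and the recorded start
vertex is the source of the first arrow (if any). -/
def Ok (Q : Quiv) (p : PathDat Q) : Prop :=
  p.2.Chain' (fun a b => Q.tgt a = Q.src b) ∧ ∀ a ∈ p.2.head?, Q.src a = p.1

/-- `p` is a path none of whose length-2 subpaths lies in `R`
(an element of the basis `B` of `kQ/⟨R⟩`). -/
def InB (Q : Quiv) (R : Set (Q.A × Q.A)) (p : PathDat Q) : Prop :=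
  Ok Q p ∧ p.2.Chain' (fun a b => (a, b) ∉ R)

/-- `p` is a path all of whose length-2 subpaths lie in `R` (an element of `Γ`). -/
def InG (Q : Quiv) (R : Set (Q.A × Q.A)) (p : PathDat Q) : Prop :=
  Ok Q p ∧ p.2.Chain' (fun a b => (a, b) ∈ R)

/-- Parallel paths: same source and same target. -/
def Par (Q : Quiv) (p q : PathDat Q) : Prop :=
  psrc Q p = psrc Q q ∧ ptgt Q p = ptgt Q q

/-- Antiparallel paths: `s(p) = t(q)` and `t(p) = s(q)`. -/
def AntiPar (Q : Quiv) (p q : PathDat Q) : Prop :=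
  psrc Q p = ptgt Q q ∧ ptgt Q p = psrc Q q

/-- A cycle: a path of positive length whose source equals its target. -/
def IsCycle (Q : Quiv) (p : PathDat Q) : Prop :=
  Ok Q p ∧ p.2 ≠ [] ∧ psrc Q p = ptgt Q p

/-- Rotation of a cycle: the paper's `rot (c_m ⋯ c_1) = c_{m-1} ⋯ c_1 c_m`
(the last arrow traversed becomes the first one traversed). -/
def rotP (Q : Quiv) (p : PathDat Q) : PathDat Q :=
  match p.2.getLast? with
  | none => p
  | some a => (Q.src a, a :: p.2.dropLast)

/-- Iterated rotation `rot^i`. -/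
def rotI (Q : Quiv) (i : ℕ) (p : PathDat Q) : PathDat Q := (rotP Q)^[i] p

def powL {α : Type} (l : List α) : ℕ → List α
  | 0 => []
  | n + 1 => l ++ powL l n

/-- The `n`-th power `p^n` of a (cyclic) path. -/
def powP (Q : Quiv) (p : PathDat Q) (n : ℕ) : PathDat Q := (p.1, powL p.2 n)

/-- A primitive cycle: a cycle that is not a proper power of another cycle. -/
def IsPrimitive (Q : Quiv) (p : PathDat Q) : Prop :=
  IsCycle Q p ∧ ∀ (q : PathDat Q) (n : ℕ), IsCycle Q q → 2 ≤ n → p ≠ powP Q q n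

/-- The period of a cycle: the least `i ≥ 1` with `rot^i p = p`. -/
noncomputable def periodP (Q : Quiv) (p : PathDat Q) : ℕ :=
  sInf {i : ℕ | 1 ≤ i ∧ rotI Q i p = p}

/-- Two cycles are conjugate (belong to the same circuit) if one is obtained
from the other by iterated rotation. -/
def RotEquiv (Q : Quiv) (p q : PathDat Q) : Prop := ∃ i : ℕ, rotI Q i p = q

/-- A cocomplete cycle: `p² ∈ B`. -/
def Cocomplete (Q : Quiv) (R : Set (Q.A × Q.A)) (p : PathDat Q) : Prop :=
  IsCycle Q p ∧ InB Q R (powP Q p 2)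

/-- A complete cycle: `p² ∈ Γ`. -/
def Complete (Q : Quiv) (R : Set (Q.A × Q.A)) (p : PathDat Q) : Prop :=
  IsCycle Q p ∧ InG Q R (powP Q p 2)

/-- `B`-maximal path: in `B` and not a proper subpath of another element of `B`. -/
def BMax (Q : Quiv) (R : Set (Q.A × Q.A)) (p : PathDat Q) : Prop :=
  InB Q R p ∧ ∀ q : PathDat Q, InB Q R q → p.2 <:+: q.2 → p.2 = q.2

/-- `Γ`-maximal path: in `Γ` and not a proper subpath of another element of `Γ`. -/
def GMax (Q : Quiv) (R : Set (Q.A × Q.A)) (p : PathDat Q) : Prop :=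
  InG Q R p ∧ ∀ q : PathDat Q, InG Q R q → p.2 <:+: q.2 → p.2 = q.2

def Adj (Q : Quiv) (v w : Q.V) : Prop :=
  ∃ a : Q.A, (Q.src a = v ∧ Q.tgt a = w) ∨ (Q.src a = w ∧ Q.tgt a = v)

/-- Connectedness of the underlying graph of the quiver. -/
def Connected (Q : Quiv) : Prop := ∀ v w : Q.V, Relation.ReflTransGen (Adj Q) v w

/-- A quadratic monomial presentation: the relations are paths of length 2. -/
def IsQuadMon (Q : Quiv) (R : Set (Q.A × Q.A)) : Prop :=
  ∀ r ∈ R, Q.tgt r.1 = Q.src r.2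

/-- A gentle presentation. -/
structure IsGentle (Q : Quiv) (R : Set (Q.A × Q.A)) : Prop where
  nonempty : Nonempty Q.V
  connected : Connected Q
  relComposable : ∀ r ∈ R, Q.tgt r.1 = Q.src r.2
  srcLe : ∀ v : Q.V, {a : Q.A | Q.src a = v}.ncard ≤ 2
  tgtLe : ∀ v : Q.V, {a : Q.A | Q.tgt a = v}.ncard ≤ 2
  uniqNotRelAfter : ∀ a : Q.A, {b : Q.A | Q.tgt a = Q.src b ∧ (a, b) ∉ R}.Subsingleton
  uniqNotRelBefore : ∀ a : Q.A, {c : Q.A | Q.tgt c = Q.src a ∧ (c, a) ∉ R}.Subsingleton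
  uniqRelAfter : ∀ a : Q.A, {b : Q.A | Q.tgt a = Q.src b ∧ (a, b) ∈ R}.Subsingleton
  uniqRelBefore : ∀ a : Q.A, {c : Q.A | Q.tgt c = Q.src a ∧ (c, a) ∈ R}.Subsingleton

/-- A spanning tree of the (finite, connected) quiver `Q`: a set of arrows
which connects all vertices and has exactly `|Q₀| - 1` elements. -/
def IsSpanningTree (Q : Quiv) (T : Set Q.A) : Prop :=
  (∀ v w : Q.V, Relation.ReflTransGen
      (fun x y => ∃ a ∈ T, (Q.src a = x ∧ Q.tgt a = y) ∨ (Q.src a = y ∧ Q.tgt a = x)) v w) ∧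
  T.ncard + 1 = Fintype.card Q.V

/-- A set of representatives, one for each rotation class of cycles
satisfying `Pred`. -/
def IsRepSet (Q : Quiv) (P : Set (PathDat Q)) (Pred : PathDat Q → Prop) : Prop :=
  (∀ p ∈ P, Pred p) ∧ ∀ q : PathDat Q, Pred q → ∃! p, p ∈ P ∧ RotEquiv Q q p

/-- `S` is a valid choice of the paper's set `Crep` for the predicate `Pred`
(e.g. cocompleteness, or completeness): it consists of all positive powers of a
chosen set of representatives of the rotation classes of primitive cycles
satisfying `Pred`. -/
def IsCrep (Q : Quiv) (S : Set (PathDat Q)) (Pred : PathDat Q → Prop) : Prop :=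
  ∃ P : Set (PathDat Q),
    IsRepSet Q P (fun p => IsPrimitive Q p ∧ Pred p) ∧
    S = {x | ∃ p ∈ P, ∃ n : ℕ, 1 ≤ n ∧ x = powP Q p n}

/-! ### The cochain complex `k(Γ ∥ B)` -/

/-- Membership in the degree-`m` basis `Γ_m ∥ B` of the cochain complex. -/
def GBmem (Q : Quiv) (R : Set (Q.A × Q.A)) (m : ℕ) (x : PathDat Q × PathDat Q) : Prop :=
  InG Q R x.1 ∧ plen Q x.1 = m ∧ InB Q R x.2 ∧ Par Q x.1 x.2

abbrev GB (Q : Quiv) (R : Set (Q.A × Q.A)) (m : ℕ) :=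
  {x : PathDat Q × PathDat Q // GBmem Q R m x}

/-- The degree-`m` component of the cochain complex `k(Γ ∥ B)`. -/
abbrev Coch (k : Type) [Field k] (Q : Quiv) (R : Set (Q.A × Q.A)) (m : ℕ) :=
  GB Q R m →₀ k

/-- The basis vector of `k(Γ_m ∥ B)` attached to a raw pair of path data
(and `0` if the pair is not in `Γ_m ∥ B`). -/
noncomputable def bv (k : Type) [Field k] (Q : Quiv) (R : Set (Q.A × Q.A)) (m : ℕ)
    (x : PathDat Q × PathDat Q) : Coch k Q R m := by
  classical
  exact if h : GBmem Q R m x then Finsupp.single (⟨x, h⟩ : GB Q R m) (1 : k) else 0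

/-- Extension on the left (in the paper's notation): `p ↦ b p`. -/
def extL (Q : Quiv) (b : Q.A) (p : PathDat Q) : PathDat Q := (p.1, p.2 ++ [b])

/-- Extension on the right (in the paper's notation): `p ↦ p a`. -/
def extR (Q : Quiv) (a : Q.A) (p : PathDat Q) : PathDat Q := (Q.src a, a :: p.2)

/-- The differential on a basis element:
`d^m (γ, α) = Σ_b (bγ, bα) - (-1)^m Σ_a (γa, αa)`. -/
noncomputable def dB (k : Type) [Field k] (Q : Quiv) (R : Set (Q.A × Q.A)) (m : ℕ)
    (x : GB Q R m) : Coch k Q R (m + 1) := by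
  classical
  exact
    (∑ b : Q.A,
      if h : GBmem Q R (m + 1) (extL Q b x.val.1, extL Q b x.val.2) then
        Finsupp.single (⟨_, h⟩ : GB Q R (m + 1)) (1 : k) else 0)
    - ((-1 : k) ^ m) •
      (∑ a : Q.A,
        if h : Q.tgt a = psrc Q x.val.1 ∧
            GBmem Q R (m + 1) (extR Q a x.val.1, extR Q a x.val.2) then
          Finsupp.single (⟨_, h.2⟩ : GB Q R (m + 1)) (1 : k) else 0)

/-- The differential `d^m : k(Γ_m ∥ B) → k(Γ_{m+1} ∥ B)`. -/
noncomputable def dLin (k : Type) [Field k] (Q : Quiv) (R : Set (Q.A × Q.A)) (m : ℕ) :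
    Coch k Q R m →ₗ[k] Coch k Q R (m + 1) :=
  Finsupp.linearCombination k (dB k Q R m)

/-- The element `𝟙 = Σ_{i ∈ Q₀} (e_i, e_i)` (placed in degree `m`; it is the
intended element when `m = 0`). -/
noncomputable def oneD (k : Type) [Field k] (Q : Quiv) (R : Set (Q.A × Q.A)) (m : ℕ) :
    Coch k Q R m :=
  ∑ i : Q.V, bv k Q R m ((i, []), (i, []))

/-- `⟨α⟩ = Σ_{i=0}^{r-1} (s(rot^i α), rot^i α)`, `r` the period of `α`. -/
noncomputable def cycB (k : Type) [Field k] (Q : Quiv) (R : Set (Q.A × Q.A)) (m : ℕ)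
    (α : PathDat Q) : Coch k Q R m :=
  ∑ i ∈ Finset.range (periodP Q α),
    bv k Q R m ((psrc Q (rotI Q i α), []), rotI Q i α)

/-- `⟨C⟩ = Σ_{i=0}^{r-1} (-1)^{i m} (rot^i C, s(rot^i C))`, `r` the period of `C`. -/
noncomputable def cycG (k : Type) [Field k] (Q : Quiv) (R : Set (Q.A × Q.A)) (m : ℕ)
    (C : PathDat Q) : Coch k Q R m :=
  ∑ i ∈ Finset.range (periodP Q C),
    ((-1 : k) ^ (i * m)) • bv k Q R m (rotI Q i C, (psrc Q (rotI Q i C), []))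

/-- The coboundary subspace in degree `m` (zero in degree `0`). -/
noncomputable def cobSp (k : Type) [Field k] (Q : Quiv) (R : Set (Q.A × Q.A)) :
    (m : ℕ) → Submodule k (Coch k Q R m)
  | 0 => ⊥
  | m + 1 => LinearMap.range (dLin k Q R m)

/-- The cocycle subspace in degree `m`. -/
noncomputable def cocSp (k : Type) [Field k] (Q : Quiv) (R : Set (Q.A × Q.A)) (m : ℕ) :
    Submodule k (Coch k Q R m) :=
  LinearMap.ker (dLin k Q R m)

/-- The degree-`m` cohomology `HH^m` of the complex `k(Γ ∥ B)` vanishes: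
every cocycle is a coboundary. -/
def CohomIsZero (k : Type) [Field k] (Q : Quiv) (R : Set (Q.A × Q.A)) (m : ℕ) : Prop :=
  cocSp k Q R m ≤ cobSp k Q R m

/-- The degree-`m` cohomology `HH^m` of the complex `k(Γ ∥ B)` is
finite-dimensional: there is a finite set of cocycles whose classes span it. -/
def CohomFinDim (k : Type) [Field k] (Q : Quiv) (R : Set (Q.A × Q.A)) (m : ℕ) : Prop :=
  ∃ G : Finset (Coch k Q R m), ↑G ⊆ (cocSp k Q R m : Set (Coch k Q R m)) ∧
    cocSp k Q R m ≤ cobSp k Q R m ⊔ Submodule.span k ↑G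

/-- The degree-`m` cohomology `HH^m` of the complex `k(Γ ∥ B)` has dimension at
most `n`: there are `n` cocycles whose classes span it. -/
def CohomDimLe (k : Type) [Field k] (Q : Quiv) (R : Set (Q.A × Q.A)) (m n : ℕ) : Prop :=
  ∃ G : Finset (Coch k Q R m), G.card ≤ n ∧
    ↑G ⊆ (cocSp k Q R m : Set (Coch k Q R m)) ∧
    cocSp k Q R m ≤ cobSp k Q R m ⊔ Submodule.span k ↑G

/-- `Gen` is a basis of the kernel of `d⁰`, i.e. it freely generates `HH⁰`. -/
def FreelyGeneratesKer0 (k : Type) [Field k] (Q : Quiv) (R : Set (Q.A × Q.A))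
    (Gen : Set (Coch k Q R 0)) : Prop :=
  (∀ x ∈ Gen, dLin k Q R 0 x = 0) ∧
  (∀ z : Coch k Q R 0, dLin k Q R 0 z = 0 → z ∈ Submodule.span k Gen) ∧
  LinearIndependent k (fun x : Gen => (x : Coch k Q R 0))

/-- The cohomology classes of the elements of `Gen` freely generate the
degree-`(m+1)` cohomology of `k(Γ ∥ B)`: all elements of `Gen` are cocycles,
every cocycle is congruent to an element of their span modulo coboundaries, no
nonzero element of their span is a coboundary, and `Gen` is linearly
independent. -/
def FreelyGeneratesCohom (k : Type) [Field k] (Q : Quiv) (R : Set (Q.A × Q.A)) (m : ℕ)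
    (Gen : Set (Coch k Q R (m + 1))) : Prop :=
  (∀ x ∈ Gen, dLin k Q R (m + 1) x = 0) ∧
  (∀ z : Coch k Q R (m + 1), dLin k Q R (m + 1) z = 0 →
      ∃ y : Coch k Q R m, z - dLin k Q R m y ∈ Submodule.span k Gen) ∧
  (∀ x ∈ Submodule.span k Gen, x ∈ LinearMap.range (dLin k Q R m) → x = 0) ∧
  LinearIndependent k (fun x : Gen => (x : Coch k Q R (m + 1)))

/-! ### The chain complex `k(B ⊙ Γ)` -/

/-- Membership in the degree-`m` basis `B ⊙ Γ_m` of the chain complex. -/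
def BGmem (Q : Quiv) (R : Set (Q.A × Q.A)) (m : ℕ) (x : PathDat Q × PathDat Q) : Prop :=
  InB Q R x.1 ∧ InG Q R x.2 ∧ plen Q x.2 = m ∧ AntiPar Q x.1 x.2

abbrev BGt (Q : Quiv) (R : Set (Q.A × Q.A)) (m : ℕ) :=
  {x : PathDat Q × PathDat Q // BGmem Q R m x}

/-- The degree-`m` component of the chain complex `k(B ⊙ Γ)`. -/
abbrev Chn (k : Type) [Field k] (Q : Quiv) (R : Set (Q.A × Q.A)) (m : ℕ) :=
  BGt Q R m →₀ k

/-- The basis vector of `k(B ⊙ Γ_m)` attached to a raw pair of path data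
(and `0` if the pair is not in `B ⊙ Γ_m`). -/
noncomputable def bw (k : Type) [Field k] (Q : Quiv) (R : Set (Q.A × Q.A)) (m : ℕ)
    (x : PathDat Q × PathDat Q) : Chn k Q R m := by
  classical
  exact if h : BGmem Q R m x then Finsupp.single (⟨x, h⟩ : BGt Q R m) (1 : k) else 0

/-- `l1(p)`: the last arrow of `p` (as a path of length one). -/
def l1P (Q : Quiv) (p : PathDat Q) : PathDat Q :=
  match p.2.getLast? with
  | none => p
  | some a => (Q.src a, [a])

/-- `l2(p)`: `p` with its last arrow removed. -/
def l2P (Q : Quiv) (p : PathDat Q) : PathDat Q := (p.1, p.2.dropLast)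

/-- `r1(p)`: `p` with its first arrow removed. -/
def r1P (Q : Quiv) (p : PathDat Q) : PathDat Q :=
  match p.2 with
  | [] => p
  | a :: l => (Q.tgt a, l)

/-- `r2(p)`: the first arrow of `p` (as a path of length one). -/
def r2P (Q : Quiv) (p : PathDat Q) : PathDat Q :=
  match p.2 with
  | [] => p
  | a :: _ => (Q.src a, [a])

/-- The raw first term `(α·l1(γ), l2(γ))` of the boundary of `(α, γ)`. -/
def d1raw (Q : Quiv) (x : PathDat Q × PathDat Q) : PathDat Q × PathDat Q :=
  match x.2.2.getLast? with
  | none => x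
  | some a => ((Q.src a, a :: x.1.2), (x.2.1, x.2.2.dropLast))

/-- The raw second term `(r2(γ)·α, r1(γ))` of the boundary of `(α, γ)`. -/
def d2raw (Q : Quiv) (x : PathDat Q × PathDat Q) : PathDat Q × PathDat Q :=
  match x.2.2 with
  | [] => x
  | c :: l => ((x.1.1, x.1.2 ++ [c]), (Q.tgt c, l))

/-- The boundary of a basis element:
`d_m (α, γ) = (α·l1(γ), l2(γ)) + (-1)^m (r2(γ)·α, r1(γ))` (in degree `m = m+1`),
where pairs whose first component is not in `B` are interpreted as `0`. -/
noncomputable def bdB (k : Type) [Field k] (Q : Quiv) (R : Set (Q.A × Q.A)) (m : ℕ)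
    (x : BGt Q R (m + 1)) : Chn k Q R m :=
  bw k Q R m (d1raw Q x.val) + ((-1 : k) ^ (m + 1)) • bw k Q R m (d2raw Q x.val)

/-- The boundary map `d_{m+1} : k(B ⊙ Γ_{m+1}) → k(B ⊙ Γ_m)`. -/
noncomputable def bd (k : Type) [Field k] (Q : Quiv) (R : Set (Q.A × Q.A)) (m : ℕ) :
    Chn k Q R (m + 1) →ₗ[k] Chn k Q R m :=
  Finsupp.linearCombination k (bdB k Q R m)

/-- The subspace of cycles in degree `m` (everything in degree `0`). -/
noncomputable def ZSp (k : Type) [Field k] (Q : Quiv) (R : Set (Q.A × Q.A)) :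
    (m : ℕ) → Submodule k (Chn k Q R m)
  | 0 => ⊤
  | m + 1 => LinearMap.ker (bd k Q R m)

/-- The subspace of boundaries in degree `m`. -/
noncomputable def BSp (k : Type) [Field k] (Q : Quiv) (R : Set (Q.A × Q.A)) (m : ℕ) :
    Submodule k (Chn k Q R m) :=
  LinearMap.range (bd k Q R m)

/-- The degree-`m` homology `HH_m` of the complex `k(B ⊙ Γ)` vanishes:
every cycle is a boundary. -/
def HomIsZero (k : Type) [Field k] (Q : Quiv) (R : Set (Q.A × Q.A)) (m : ℕ) : Prop :=
  ZSp k Q R m ≤ BSp k Q R m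

/-- The degree-`m` homology `HH_m` of the complex `k(B ⊙ Γ)` is
finite-dimensional: there is a finite set of cycles whose classes span it. -/
def HomFinDim (k : Type) [Field k] (Q : Quiv) (R : Set (Q.A × Q.A)) (m : ℕ) : Prop :=
  ∃ G : Finset (Chn k Q R m), ↑G ⊆ (ZSp k Q R m : Set (Chn k Q R m)) ∧
    ZSp k Q R m ≤ BSp k Q R m ⊔ Submodule.span k ↑G

/-- The concatenation `α γ` of an antiparallel pair (a cycle, or a trivial path). -/
def concatP (Q : Quiv) (x : PathDat Q × PathDat Q) : PathDat Q := (x.2.1, x.2.2 ++ x.1.2)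

/-- The degree-`m` component of the subcomplex `k(B ⊙ Γ)_C`, spanned by the
basis elements whose concatenation lies in the circuit (rotation class) of `c`. -/
noncomputable def Wsp (k : Type) [Field k] (Q : Quiv) (R : Set (Q.A × Q.A))
    (c : PathDat Q) (m : ℕ) : Submodule k (Chn k Q R m) :=
  Submodule.span k {z : Chn k Q R m |
    ∃ x : BGt Q R m, RotEquiv Q (concatP Q x.val) c ∧ z = Finsupp.single x (1 : k)}

/-- The boundaries of the subcomplex `k(B ⊙ Γ)_C` in degree `m`. -/
noncomputable def WB (k : Type) [Field k] (Q : Quiv) (R : Set (Q.A × Q.A))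
    (c : PathDat Q) (m : ℕ) : Submodule k (Chn k Q R m) :=
  Submodule.map (bd k Q R m) (Wsp k Q R c (m + 1))

/-- The cycles of the subcomplex `k(B ⊙ Γ)_C` in degree `m`. -/
noncomputable def WZ (k : Type) [Field k] (Q : Quiv) (R : Set (Q.A × Q.A))
    (c : PathDat Q) (m : ℕ) : Submodule k (Chn k Q R m) :=
  ZSp k Q R m ⊓ Wsp k Q R c m

/-- The degree-`m` homology of `k(B ⊙ Γ)_C` is one-dimensional, spanned by the
homology class of `v`. -/
def SubHomSpannedBy (k : Type) [Field k] (Q : Quiv) (R : Set (Q.A × Q.A))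
    (c : PathDat Q) (m : ℕ) (v : Chn k Q R m) : Prop :=
  v ∈ WZ k Q R c m ∧ v ∉ WB k Q R c m ∧
  ∀ z ∈ WZ k Q R c m, ∃ t : k, z - t • v ∈ WB k Q R c m

/-- `ĥ(c) = Σ_{i=0}^{r-1} (r1(rot^i c), r2(rot^i c))` (degree 1, for cocomplete cycles;
placed in degree `m`). -/
noncomputable def hCycR (k : Type) [Field k] (Q : Quiv) (R : Set (Q.A × Q.A)) (m : ℕ)
    (c : PathDat Q) : Chn k Q R m :=
  ∑ i ∈ Finset.range (periodP Q c),
    bw k Q R m (r1P Q (rotI Q i c), r2P Q (rotI Q i c))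

/-- `ĥ(c) = Σ_{i=0}^{r-1} (-1)^{(m+1) i} (s(rot^i c), rot^i c)` (degree `m`, for
complete cycles of length `m`). -/
noncomputable def hCycM (k : Type) [Field k] (Q : Quiv) (R : Set (Q.A × Q.A)) (m : ℕ)
    (c : PathDat Q) : Chn k Q R m :=
  ∑ i ∈ Finset.range (periodP Q c),
    ((-1 : k) ^ ((m + 1) * i)) • bw k Q R m ((psrc Q (rotI Q i c), []), rotI Q i c)

/-- The homology classes of the elements of `Gen` freely generate the degree-`m`
homology of `k(B ⊙ Γ)`. -/
def FreelyGeneratesHom (k : Type) [Field k] (Q : Quiv) (R : Set (Q.A × Q.A)) (m : ℕ)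
    (Gen : Set (Chn k Q R m)) : Prop :=
  (∀ x ∈ Gen, x ∈ ZSp k Q R m) ∧
  (∀ z ∈ ZSp k Q R m, ∃ y : Chn k Q R (m + 1), z - bd k Q R m y ∈ Submodule.span k Gen) ∧
  (∀ x ∈ Submodule.span k Gen, x ∈ LinearMap.range (bd k Q R m) → x = 0) ∧
  LinearIndependent k (fun x : Gen => (x : Chn k Q R m))

section DSquaredAux

variable {Q : Quiv} {R : Set (Q.A × Q.A)}

/-- Simultaneous extension on the left of a pair of parallel paths. -/
def pairL (Q : Quiv) (b : Q.A) (x : PathDat Q × PathDat Q) : PathDat Q × PathDat Q :=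
  (extL Q b x.1, extL Q b x.2)

/-- Simultaneous extension on the right of a pair of parallel paths. -/
def pairR (Q : Quiv) (a : Q.A) (x : PathDat Q × PathDat Q) : PathDat Q × PathDat Q :=
  (extR Q a x.1, extR Q a x.2)

lemma bv_pos (k : Type) [Field k] {n : ℕ} {x : PathDat Q × PathDat Q}
    (h : GBmem Q R n x) : bv k Q R n x = Finsupp.single (⟨x, h⟩ : GB Q R n) 1 := by
  unfold bv; exact dif_pos h

lemma bv_neg (k : Type) [Field k] {n : ℕ} {x : PathDat Q × PathDat Q}
    (h : ¬ GBmem Q R n x) : bv k Q R n x = 0 := by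
  unfold bv; exact dif_neg h

lemma not_GB_LL {n : ℕ} (b b' : Q.A) (x : PathDat Q × PathDat Q) :
    ¬ GBmem Q R n (pairL Q b' (pairL Q b x)) := by
  rintro ⟨⟨_, hG⟩, _, ⟨_, hB⟩, _⟩
  have hG' : List.Chain' (fun u v => (u, v) ∈ R) ((x.1.2 ++ [b]) ++ [b']) := hG
  have hB' : List.Chain' (fun u v => (u, v) ∉ R) ((x.2.2 ++ [b]) ++ [b']) := hB
  have hs1 : [b, b'] <:+ (x.1.2 ++ [b]) ++ [b'] := by
    rw [List.append_assoc]; exact List.suffix_append _ _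
  have hs2 : [b, b'] <:+ (x.2.2 ++ [b]) ++ [b'] := by
    rw [List.append_assoc]; exact List.suffix_append _ _
  exact (List.isChain_pair.mp (hB'.suffix hs2)) (List.isChain_pair.mp (hG'.suffix hs1))

lemma not_GB_RR {n : ℕ} (a a' : Q.A) (x : PathDat Q × PathDat Q) :
    ¬ GBmem Q R n (pairR Q a' (pairR Q a x)) := by
  rintro ⟨⟨_, hG⟩, _, ⟨_, hB⟩, _⟩
  have hG' : List.Chain' (fun u v => (u, v) ∈ R) (a' :: a :: x.1.2) := hG
  have hB' : List.Chain' (fun u v => (u, v) ∉ R) (a' :: a :: x.2.2) := hB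
  exact (List.isChain_cons_cons.mp hB').1 (List.isChain_cons_cons.mp hG').1

lemma RL_tgt {m n : ℕ} {p : PathDat Q × PathDat Q} (hp : GBmem Q R m p) {a b : Q.A}
    (h : GBmem Q R n (pairR Q a (pairL Q b p))) : Q.tgt a = psrc Q p.1 := by
  have hGc : List.Chain' (fun u v => Q.tgt u = Q.src v) (a :: (p.1.2 ++ [b])) := h.1.1.1
  have hGr : List.Chain' (fun u v => (u, v) ∈ R) (a :: (p.1.2 ++ [b])) := h.1.2
  have hBc : List.Chain' (fun u v => Q.tgt u = Q.src v) (a :: (p.2.2 ++ [b])) := h.2.2.1.1.1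
  have hBr : List.Chain' (fun u v => (u, v) ∉ R) (a :: (p.2.2 ++ [b])) := h.2.2.1.2
  cases hl : p.1.2 with
  | cons c l =>
      rw [hl] at hGc
      exact ((List.isChain_cons_cons.mp hGc).1).trans (hp.1.1.2 c (by rw [hl]; rfl))
  | nil =>
      cases hl2 : p.2.2 with
      | cons c l =>
          rw [hl2] at hBc
          have h2 : Q.src c = p.2.1 := hp.2.2.1.1.2 c (by rw [hl2]; rfl)
          exact (((List.isChain_cons_cons.mp hBc).1).trans h2).trans hp.2.2.2.1.symm
      | nil =>
          exfalso
          rw [hl] at hGr; rw [hl2] at hBr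
          exact (List.isChain_pair.mp hBr) (List.isChain_pair.mp hGr)

end DSquaredAux

section DSquaredAux2

variable {Q : Quiv} {R : Set (Q.A × Q.A)}

lemma ptgt_extL (b : Q.A) (q : PathDat Q) : ptgt Q (extL Q b q) = Q.tgt b := by
  simp [ptgt, extL, List.getLast?_concat, Option.elim]

lemma ptgt_of_nil {q : PathDat Q} (hq : q.2 = []) : ptgt Q q = q.1 := by
  simp [ptgt, hq, Option.elim]

lemma ptgt_extR_nil (a : Q.A) {q : PathDat Q} (hq : q.2 = []) :
    ptgt Q (extR Q a q) = Q.tgt a := by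
  simp [ptgt, extR, hq, Option.elim]

lemma ptgt_extR_cons (a : Q.A) {q : PathDat Q} (hq : q.2 ≠ []) :
    ptgt Q (extR Q a q) = ptgt Q q := by
  obtain ⟨c, l, h⟩ := List.exists_cons_of_ne_nil hq
  cases hy : (c :: l).getLast? with
  | none => simp at hy
  | some y => simp [ptgt, extR, h, List.getLast?_cons_cons, hy, Option.elim]

lemma RL_interL {m : ℕ} {p : PathDat Q × PathDat Q} (hp : GBmem Q R m p) {a b : Q.A}
    (h : GBmem Q R (m + 2) (pairR Q a (pairL Q b p))) :
    GBmem Q R (m + 1) (pairL Q b p) := by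
  have ht : Q.tgt a = psrc Q p.1 := RL_tgt hp h
  have hGc : List.Chain' (fun u v => Q.tgt u = Q.src v) (a :: (p.1.2 ++ [b])) := h.1.1.1
  have hGr : List.Chain' (fun u v => (u, v) ∈ R) (a :: (p.1.2 ++ [b])) := h.1.2
  have hBc : List.Chain' (fun u v => Q.tgt u = Q.src v) (a :: (p.2.2 ++ [b])) := h.2.2.1.1.1
  have hBr : List.Chain' (fun u v => (u, v) ∉ R) (a :: (p.2.2 ++ [b])) := h.2.2.1.2
  have hm : p.1.2.length = m := hp.2.1
  refine ⟨⟨⟨hGc.tail, ?_⟩, hGr.tail⟩, ?_, ⟨⟨hBc.tail, ?_⟩, hBr.tail⟩, hp.2.2.2.1, ?_⟩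
  · intro c hc
    simp only [pairL, extL] at hc ⊢
    cases hl : p.1.2 with
    | nil =>
        rw [hl] at hc
        simp only [List.nil_append, List.head?_cons, Option.mem_def, Option.some.injEq] at hc
        subst hc
        rw [hl] at hGc
        exact ((List.isChain_cons_cons.mp hGc).1).symm.trans ht
    | cons d l =>
        rw [hl] at hc
        simp only [List.cons_append, List.head?_cons, Option.mem_def, Option.some.injEq] at hc
        subst hc
        exact hp.1.1.2 d (by rw [hl]; rfl)
  · simp [pairL, plen, extL, hm]
  · intro c hc
    simp only [pairL, extL] at hc ⊢
    cases hl : p.2.2 with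
    | nil =>
        rw [hl] at hc
        simp only [List.nil_append, List.head?_cons, Option.mem_def, Option.some.injEq] at hc
        subst hc
        rw [hl] at hBc
        exact ((List.isChain_cons_cons.mp hBc).1).symm.trans (ht.trans hp.2.2.2.1)
    | cons d l =>
        rw [hl] at hc
        simp only [List.cons_append, List.head?_cons, Option.mem_def, Option.some.injEq] at hc
        subst hc
        exact hp.2.2.1.1.2 d (by rw [hl]; rfl)
  · show ptgt Q (extL Q b p.1) = ptgt Q (extL Q b p.2)
    rw [ptgt_extL, ptgt_extL]

lemma RL_interR {m : ℕ} {p : PathDat Q × PathDat Q} (hp : GBmem Q R m p) {a b : Q.A}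
    (h : GBmem Q R (m + 2) (pairR Q a (pairL Q b p))) :
    GBmem Q R (m + 1) (pairR Q a p) := by
  have ht : Q.tgt a = psrc Q p.1 := RL_tgt hp h
  have hGc : List.Chain' (fun u v => Q.tgt u = Q.src v) (a :: (p.1.2 ++ [b])) := h.1.1.1
  have hGr : List.Chain' (fun u v => (u, v) ∈ R) (a :: (p.1.2 ++ [b])) := h.1.2
  have hBc : List.Chain' (fun u v => Q.tgt u = Q.src v) (a :: (p.2.2 ++ [b])) := h.2.2.1.1.1
  have hBr : List.Chain' (fun u v => (u, v) ∉ R) (a :: (p.2.2 ++ [b])) := h.2.2.1.2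
  have hm : p.1.2.length = m := hp.2.1
  have hpre1 : a :: p.1.2 <+: a :: (p.1.2 ++ [b]) := ⟨[b], by simp⟩
  have hpre2 : a :: p.2.2 <+: a :: (p.2.2 ++ [b]) := ⟨[b], by simp⟩
  refine ⟨⟨⟨hGc.prefix hpre1, ?_⟩, hGr.prefix hpre1⟩, ?_, ⟨⟨hBc.prefix hpre2, ?_⟩,
    hBr.prefix hpre2⟩, rfl, ?_⟩
  · intro c hc
    simp only [pairR, extR, List.head?_cons, Option.mem_def, Option.some.injEq] at hc
    subst hc; rfl
  · simp [pairR, plen, extR, hm]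
  · intro c hc
    simp only [pairR, extR, List.head?_cons, Option.mem_def, Option.some.injEq] at hc
    subst hc; rfl
  · show ptgt Q (extR Q a p.1) = ptgt Q (extR Q a p.2)
    by_cases h1 : p.1.2 = [] <;> by_cases h2 : p.2.2 = []
    · rw [ptgt_extR_nil a h1, ptgt_extR_nil a h2]
    · rw [ptgt_extR_nil a h1, ptgt_extR_cons a h2]
      exact (ht.trans (ptgt_of_nil h1).symm).trans hp.2.2.2.2
    · rw [ptgt_extR_cons a h1, ptgt_extR_nil a h2]
      exact hp.2.2.2.2.trans ((ptgt_of_nil h2).trans (hp.2.2.2.1.symm.trans ht.symm))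
    · rw [ptgt_extR_cons a h1, ptgt_extR_cons a h2]
      exact hp.2.2.2.2

end DSquaredAux2

section DSquaredMain

variable {Q : Quiv} {R : Set (Q.A × Q.A)}

lemma dLin_dB (k : Type) [Field k] (m : ℕ) (y : GB Q R m) :
    dLin k Q R (m + 1) (dB k Q R m y) = 0 := by
  classical
  obtain ⟨p, hp⟩ := y
  have hdB : ∀ (n : ℕ) (q : PathDat Q × PathDat Q) (hq : GBmem Q R n q),
      dB k Q R n ⟨q, hq⟩ =
        (∑ b : Q.A, if h : GBmem Q R (n + 1) (pairL Q b q) then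
            Finsupp.single (⟨_, h⟩ : GB Q R (n + 1)) (1 : k) else 0)
        - ((-1 : k) ^ n) • ∑ a : Q.A, (if h : Q.tgt a = psrc Q q.1 ∧
              GBmem Q R (n + 1) (pairR Q a q) then
            Finsupp.single (⟨_, h.2⟩ : GB Q R (n + 1)) (1 : k) else 0) :=
    fun n q hq => rfl
  have hsingle : ∀ (n : ℕ) (z : GB Q R n),
      dLin k Q R n (Finsupp.single z (1 : k)) = dB k Q R n z := by
    intro n z
    simp [dLin, Finsupp.linearCombination_single]
  rw [hdB m p hp, map_sub, map_smul, map_sum, map_sum]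
  have hA : ∀ b : Q.A,
      dLin k Q R (m + 1) (if h : GBmem Q R (m + 1) (pairL Q b p) then
          Finsupp.single (⟨_, h⟩ : GB Q R (m + 1)) (1 : k) else 0)
      = ((-1 : k) ^ m) • ∑ a : Q.A, bv k Q R (m + 2) (pairR Q a (pairL Q b p)) := by
    intro b
    by_cases hb : GBmem Q R (m + 1) (pairL Q b p)
    · rw [dif_pos hb, hsingle, hdB (m + 1) (pairL Q b p) hb]
      have e1 : (∑ b' : Q.A, if h : GBmem Q R (m + 1 + 1) (pairL Q b' (pairL Q b p)) then
          Finsupp.single (⟨_, h⟩ : GB Q R (m + 1 + 1)) (1 : k) else 0) = 0 :=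
        Finset.sum_eq_zero (fun b' _ => dif_neg (not_GB_LL b b' p))
      have e2 : ∀ a : Q.A,
          (if h : Q.tgt a = psrc Q (pairL Q b p).1 ∧
              GBmem Q R (m + 1 + 1) (pairR Q a (pairL Q b p)) then
            Finsupp.single (⟨_, h.2⟩ : GB Q R (m + 1 + 1)) (1 : k) else 0)
          = bv k Q R (m + 2) (pairR Q a (pairL Q b p)) := by
        intro a
        by_cases hfin : GBmem Q R (m + 2) (pairR Q a (pairL Q b p))
        · have hc : Q.tgt a = psrc Q (pairL Q b p).1 ∧
              GBmem Q R (m + 1 + 1) (pairR Q a (pairL Q b p)) := ⟨RL_tgt hp hfin, hfin⟩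
          rw [dif_pos hc, bv_pos k hfin]
        · rw [dif_neg (fun hc => hfin hc.2), bv_neg k hfin]
      rw [e1, Finset.sum_congr rfl (fun a _ => e2 a), zero_sub, ← neg_smul]
      congr 1
      simp [pow_succ]
    · rw [dif_neg hb, map_zero,
        Finset.sum_eq_zero (fun a _ => bv_neg k (fun hfin => hb (RL_interL hp hfin))),
        smul_zero]
  have hB2 : ∀ a : Q.A,
      dLin k Q R (m + 1) (if h : Q.tgt a = psrc Q p.1 ∧
          GBmem Q R (m + 1) (pairR Q a p) then
          Finsupp.single (⟨_, h.2⟩ : GB Q R (m + 1)) (1 : k) else 0)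
      = ∑ b : Q.A, bv k Q R (m + 2) (pairR Q a (pairL Q b p)) := by
    intro a
    by_cases ha : Q.tgt a = psrc Q p.1 ∧ GBmem Q R (m + 1) (pairR Q a p)
    · rw [dif_pos ha, hsingle, hdB (m + 1) (pairR Q a p) ha.2]
      have e1 : (∑ a' : Q.A, if h : Q.tgt a' = psrc Q (pairR Q a p).1 ∧
          GBmem Q R (m + 1 + 1) (pairR Q a' (pairR Q a p)) then
            Finsupp.single (⟨_, h.2⟩ : GB Q R (m + 1 + 1)) (1 : k) else 0) = 0 :=
        Finset.sum_eq_zero (fun a' _ => dif_neg (fun hc => not_GB_RR a a' p hc.2))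
      have e2 : ∀ b : Q.A,
          (if h : GBmem Q R (m + 1 + 1) (pairL Q b (pairR Q a p)) then
            Finsupp.single (⟨_, h⟩ : GB Q R (m + 1 + 1)) (1 : k) else 0)
          = bv k Q R (m + 2) (pairR Q a (pairL Q b p)) := by
        intro b
        by_cases hfin : GBmem Q R (m + 2) (pairR Q a (pairL Q b p))
        · rw [dif_pos (show GBmem Q R (m + 1 + 1) (pairL Q b (pairR Q a p)) from hfin),
            bv_pos k hfin]
          rfl
        · rw [dif_neg (show ¬ GBmem Q R (m + 1 + 1) (pairL Q b (pairR Q a p)) from hfin),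
            bv_neg k hfin]
      rw [e1, Finset.sum_congr rfl (fun b _ => e2 b), smul_zero, sub_zero]
    · rw [dif_neg ha, map_zero,
        Finset.sum_eq_zero (fun b _ => bv_neg k
          (fun hfin => ha ⟨RL_tgt hp hfin, RL_interR hp hfin⟩))]
  rw [Finset.sum_congr rfl (fun b _ => hA b), Finset.sum_congr rfl (fun a _ => hB2 a),
    ← Finset.smul_sum, ← smul_sub]
  have hcomm : (∑ b : Q.A, ∑ a : Q.A, bv k Q R (m + 2) (pairR Q a (pairL Q b p)))
      = ∑ a : Q.A, ∑ b : Q.A, bv k Q R (m + 2) (pairR Q a (pairL Q b p)) :=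
    Finset.sum_comm
  rw [hcomm, sub_self, smul_zero]

end DSquaredMain

/-- For a gentle presentation `(Q, R)`, the graded vector space
`k(Γ ∥ B)` with the differentials `d^m` is a cochain complex: `d^{m+1} ∘ d^m = 0`. -/
theorem gamma_parallel_B_is_complex (k : Type) [Field k] (Q : Quiv)
    (R : Set (Q.A × Q.A)) (hg : IsGentle Q R) (m : ℕ) (x : Coch k Q R m) :
    dLin k Q R (m + 1) (dLin k Q R m x) = 0 := by
  classical
  have h0 : (⇑(dLin k Q R (m + 1)) ∘ dB k Q R m) = 0 := funext (fun y => dLin_dB k m y)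
  have h1 : dLin k Q R m x = Finsupp.linearCombination k (dB k Q R m) x := rfl
  rw [h1, Finsupp.apply_linearCombination, h0, Finsupp.linearCombination_zero]
  rfl

end GentleTT
end

section
/- Let (Q,R) be a gentle presentation and let u be an element of Γ_1∥B. If u is a cocycle of the complex k(Γ∥B) and not a coboundary, then one of the following holds: (i) the characteristic of k is 2 and there is a loop b with b² ∈ R such that u = (b,s(b)); (ii) there is a Γ-maximal arrow c and a path α ∈ B neither beginning nor ending with c such that u = (c,α); (iii) there is a cocomplete cycle δ starting with an arrow c such that u = (c,cδ); (iv) there is an arrow c with u = (c,c). Conversely, if u satisfies one of these four conditions then u is a cocycle. -/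
/-!
Common framework: quivers, paths (as a start vertex together with a list of
composable arrows, listed in order of traversal, so that the paper's path
`c_m ⋯ c_1` corresponds to the list `[c_1, …, c_m]`), gentle and quadratic
monomial presentations, the cochain complex `k(Γ ∥ B)` and the chain complex
`k(B ⊙ Γ)` of the paper.
-/

namespace GentleTT

/-- The four alternatives of Statement 3 for an element `u` of `Γ₁ ∥ B`. -/
def RankOneAlternatives (k : Type) [Field k] (Q : Quiv) (R : Set (Q.A × Q.A))
    (u : GB Q R 1) : Prop :=
  (ringChar k = 2 ∧ ∃ b : Q.A, Q.src b = Q.tgt b ∧ (b, b) ∈ R ∧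
      u.val = ((Q.src b, [b]), (Q.src b, []))) ∨
  (∃ (c : Q.A) (α : PathDat Q), GMax Q R (Q.src c, [c]) ∧
      α.2.head? ≠ some c ∧ α.2.getLast? ≠ some c ∧ u.val = ((Q.src c, [c]), α)) ∨
  (∃ (c : Q.A) (δ : PathDat Q), Cocomplete Q R δ ∧ δ.2.head? = some c ∧
      u.val = ((Q.src c, [c]), (δ.1, δ.2 ++ [c]))) ∨
  (∃ c : Q.A, u.val = ((Q.src c, [c]), (Q.src c, [c])))


/-! ### Auxiliary lemmas for Statement 3 -/

section Stmt3Aux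

open Classical

variable {k : Type} [Field k] {Q : Quiv} {R : Set (Q.A × Q.A)}

private lemma ne_nil_of_getLast?_eq_some {α : Type} {l : List α} {a : α}
    (h : l.getLast? = some a) : l ≠ [] := by
  rintro rfl; simp at h

private lemma dropLast_concat_getLast? {α : Type} {l : List α} {a : α}
    (h : l.getLast? = some a) : l.dropLast ++ [a] = l := by
  have hne : l ≠ [] := ne_nil_of_getLast?_eq_some h
  rw [List.getLast?_eq_getLast hne, Option.some_inj] at h
  rw [← h]; exact List.dropLast_append_getLast hne

private lemma eq_cons_of_head? {α : Type} {l : List α} {a : α}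
    (h : l.head? = some a) : l = a :: l.tail := by
  cases l with
  | nil => simp at h
  | cons x t => simp at h; rw [h]; rfl

private lemma chain'_concat_iff {α : Type} {r : α → α → Prop} {l : List α} {a : α} :
    List.Chain' r (l ++ [a]) ↔ List.Chain' r l ∧ ∀ x ∈ l.getLast?, r x a := by
  unfold List.Chain'; rw [List.isChain_append]; simp

private lemma ptgt_concat (v : Q.V) (l : List Q.A) (a : Q.A) :
    ptgt Q (v, l ++ [a]) = Q.tgt a := by simp [ptgt, List.getLast?_concat]

private lemma ptgt_eq_of_getLast? {v : Q.V} {l : List Q.A} {a : Q.A}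
    (h : l.getLast? = some a) : ptgt Q (v, l) = Q.tgt a := by simp [ptgt, h]

private lemma ptgt_single (v : Q.V) (a : Q.A) : ptgt Q (v, [a]) = Q.tgt a := by
  simp [ptgt]

private lemma dLin_single (m : ℕ) (x : GB Q R m) :
    dLin k Q R m (Finsupp.single x 1) = dB k Q R m x := by
  simp [dLin, Finsupp.linearCombination_single]

private lemma dB_def (m : ℕ) (x : GB Q R m) :
    dB k Q R m x =
      (∑ b : Q.A,
        if h : GBmem Q R (m + 1) (extL Q b x.val.1, extL Q b x.val.2) then
          Finsupp.single (⟨_, h⟩ : GB Q R (m + 1)) (1 : k) else 0)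
      - ((-1 : k) ^ m) •
        (∑ a : Q.A,
          if h : Q.tgt a = psrc Q x.val.1 ∧
              GBmem Q R (m + 1) (extR Q a x.val.1, extR Q a x.val.2) then
            Finsupp.single (⟨_, h.2⟩ : GB Q R (m + 1)) (1 : k) else 0) := rfl

private lemma dB_eq_zero {m : ℕ} (x : GB Q R m)
    (hL : ∀ b, ¬ GBmem Q R (m + 1) (extL Q b x.val.1, extL Q b x.val.2))
    (hR : ∀ a, ¬ (Q.tgt a = psrc Q x.val.1 ∧
        GBmem Q R (m + 1) (extR Q a x.val.1, extR Q a x.val.2))) :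
    dB k Q R m x = 0 := by
  rw [dB_def, Finset.sum_eq_zero (fun b _ => dif_neg (hL b)),
    Finset.sum_eq_zero (fun a _ => dif_neg (hR a))]
  simp

/-- The basic facts recorded by membership of `((s c, [c]), (s c, l))` in `Γ₁ ∥ B`. -/
private lemma ufacts {c : Q.A} {l : List Q.A}
    (hu : GBmem Q R 1 ((Q.src c, [c]), (Q.src c, l))) :
    List.Chain' (fun a b => Q.tgt a = Q.src b) l ∧ (∀ x ∈ l.head?, Q.src x = Q.src c) ∧
      List.Chain' (fun a b => (a, b) ∉ R) l ∧ Q.tgt c = ptgt Q (Q.src c, l) := by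
  obtain ⟨_, _, ⟨⟨h1, h2⟩, h3⟩, _, h4⟩ := hu
  refine ⟨h1, h2, h3, ?_⟩
  rw [← h4, ptgt_single]

private lemma sum_dite_single_eq {ι X : Type} [Fintype ι] {P : ι → Prop}
    [∀ i, Decidable (P i)] (pt : ∀ i, P i → X) (c : ι) (hc : P c)
    (huniq : ∀ i, P i → i = c) :
    (∑ i : ι, if h : P i then Finsupp.single (pt i h) (1 : k) else 0)
      = Finsupp.single (pt c hc) (1 : k) := by
  rw [Finset.sum_eq_single_of_mem c (Finset.mem_univ c)]
  · rw [dif_pos hc]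
  · intro b _ hbc
    exact dif_neg fun h => hbc (huniq b h)

private lemma sum_dite_single_eq_zero {ι X : Type} [Fintype ι] {P : ι → Prop}
    [∀ i, Decidable (P i)] (pt : ∀ i, P i → X) (hnone : ∀ i, ¬ P i) :
    (∑ i : ι, if h : P i then Finsupp.single (pt i h) (1 : k) else 0) = (0 : X →₀ k) := by
  exact Finset.sum_eq_zero fun i _ => dif_neg (hnone i)

private lemma sum_dite_single_apply_eq {ι X : Type} [Fintype ι] [DecidableEq X]
    {P : ι → Prop} [∀ i, Decidable (P i)] (pt : ∀ i, P i → X) (e : X) (c : ι) (hc : P c)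
    (hce : pt c hc = e) (huniq : ∀ i (h : P i), pt i h = e → i = c) :
    (∑ i : ι, if h : P i then Finsupp.single (pt i h) (1 : k) else 0) e = 1 := by
  rw [Finsupp.finset_sum_apply, Finset.sum_eq_single_of_mem c (Finset.mem_univ c)]
  · rw [dif_pos hc, hce, Finsupp.single_eq_same]
  · intro b _ hbc
    by_cases h : P b
    · rw [dif_pos h, Finsupp.single_apply, if_neg fun hh => hbc (huniq b h hh)]
    · rw [dif_neg h, Finsupp.zero_apply]

private lemma sum_dite_single_apply_eq_zero {ι X : Type} [Fintype ι] [DecidableEq X]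
    {P : ι → Prop} [∀ i, Decidable (P i)] (pt : ∀ i, P i → X) (e : X)
    (hnone : ∀ i (h : P i), pt i h ≠ e) :
    (∑ i : ι, if h : P i then Finsupp.single (pt i h) (1 : k) else 0) e = 0 := by
  rw [Finsupp.finset_sum_apply]
  refine Finset.sum_eq_zero fun i _ => ?_
  by_cases h : P i
  · rw [dif_pos h, Finsupp.single_apply, if_neg (hnone i h)]
  · rw [dif_neg h, Finsupp.zero_apply]

private lemma converse_cocycle (hg : IsGentle Q R) (u : GB Q R 1)
    (halt : RankOneAlternatives k Q R u) :
    dLin k Q R 1 (Finsupp.single u (1 : k)) = 0 := by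
  rw [dLin_single]
  rcases halt with ⟨hch, c, hloop, hcc, hval⟩ | ⟨c, α, hmax, hh, hl, hval⟩ |
    ⟨c, δ, hδ, hh, hval⟩ | ⟨c, hval⟩
  · -- (i) : char 2, loop with relation
    have h2 : (1 + 1 : k) = 0 := by
      haveI : CharP k 2 := hch ▸ ringChar.charP k
      have h3 := CharP.cast_eq_zero k 2
      norm_num at h3
      rw [one_add_one_eq_two, h3]
    have hPP : GBmem Q R (1 + 1)
        (extL Q c (Q.src c, [c]), extL Q c (Q.src c, ([] : List Q.A))) := by
      refine ⟨⟨⟨?_, ?_⟩, ?_⟩, rfl, ⟨⟨?_, ?_⟩, ?_⟩, rfl, ?_⟩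
      · simpa [extL, List.Chain'] using hloop.symm
      · intro a ha; simp [extL] at ha; subst ha; rfl
      · simpa [extL, List.Chain'] using hcc
      · simp [extL, List.Chain']
      · intro a ha; simp [extL] at ha; subst ha; rfl
      · simp [extL, List.Chain']
      · simp [extL, ptgt]
    have hP : GBmem Q R (1 + 1) (extL Q c u.val.1, extL Q c u.val.2) := by
      rw [hval]; exact hPP
    have hQ : Q.tgt c = psrc Q u.val.1 ∧
        GBmem Q R (1 + 1) (extR Q c u.val.1, extR Q c u.val.2) := by
      constructor
      · rw [hval]; exact hloop.symm
      · rw [hval]; exact hPP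
    rw [dB_def]
    rw [sum_dite_single_eq (k := k) _ c hP ?uL, sum_dite_single_eq (k := k) _ c hQ ?uR]
    case uL =>
      intro b hb
      have h1 : Q.tgt c = Q.src b := by
        have := hb.1.1.1; rw [hval] at this; simpa [extL, List.Chain'] using this
      have h3 : (c, b) ∈ R := by
        have := hb.1.2; rw [hval] at this; simpa [extL, List.Chain'] using this
      exact hg.uniqRelAfter c ⟨h1, h3⟩ ⟨hloop.symm, hcc⟩
    case uR =>
      intro a ha
      have h1 : Q.tgt a = Q.src c := by
        have := ha.2.1.1.1; rw [hval] at this; simpa [extR, List.Chain'] using this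
      have h3 : (a, c) ∈ R := by
        have := ha.2.1.2; rw [hval] at this; simpa [extR, List.Chain'] using this
      exact hg.uniqRelBefore c ⟨h1, h3⟩ ⟨hloop.symm, hcc⟩
    have hpt : (⟨(extR Q c u.val.1, extR Q c u.val.2), hQ.2⟩ : GB Q R (1 + 1))
        = ⟨(extL Q c u.val.1, extL Q c u.val.2), hP⟩ := Subtype.ext (by
          show (extR Q c u.val.1, extR Q c u.val.2) = (extL Q c u.val.1, extL Q c u.val.2)
          rw [hval]; rfl)
    rw [hpt, pow_one, neg_one_smul, sub_neg_eq_add, ← Finsupp.single_add, h2,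
      Finsupp.single_zero]
  · -- (ii) : Γ-maximal arrow
    refine dB_eq_zero u (fun b h => ?_) (fun a h => ?_)
    · have h1 : InG Q R (extL Q b u.val.1) := h.1
      rw [hval] at h1
      have := hmax.2 _ h1 ⟨[], [b], rfl⟩
      simp [extL] at this
    · have h1 : InG Q R (extR Q a u.val.1) := h.2.1
      rw [hval] at h1
      have := hmax.2 _ h1 ⟨[a], [], by simp [extR]⟩
      simp [extR] at this
  · -- (iii) : cocomplete cycle
    obtain ⟨t, ht⟩ : ∃ t, δ.2 = c :: t := ⟨δ.2.tail, eq_cons_of_head? hh⟩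
    refine dB_eq_zero u (fun b h => ?_) (fun a h => ?_)
    · obtain ⟨hγ, _, hB, _⟩ := h
      rw [hval] at hγ hB
      have hcb : (c, b) ∈ R := by simpa [extL, List.Chain'] using hγ.2
      have h2 := hB.2
      rw [show extL Q b ((Q.src c, [c]), (δ.1, δ.2 ++ [c])).2
          = (δ.1, (δ.2 ++ [c]) ++ [b]) from rfl, chain'_concat_iff] at h2
      exact h2.2 c (by simp) hcb
    · obtain ⟨hta, hγ, _, hB, _⟩ := h
      rw [hval] at hγ hB
      have hac : (a, c) ∈ R := by simpa [extR, List.Chain'] using hγ.2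
      have h2 := hB.2
      rw [show extR Q a ((Q.src c, [c]), (δ.1, δ.2 ++ [c])).2
          = (Q.src a, a :: (δ.2 ++ [c])) from rfl, List.Chain', List.isChain_cons] at h2
      exact h2.1 c (by rw [ht]; simp) hac
  · -- (iv) : u = (c, c)
    refine dB_eq_zero u (fun b h => ?_) (fun a h => ?_)
    · obtain ⟨hγ, _, hB, _⟩ := h
      rw [hval] at hγ hB
      have hcb : (c, b) ∈ R := by simpa [extL, List.Chain'] using hγ.2
      have h2 : (c, b) ∉ R := by simpa [extL, List.Chain'] using hB.2
      exact h2 hcb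
    · obtain ⟨hta, hγ, _, hB, _⟩ := h
      rw [hval] at hγ hB
      have hac : (a, c) ∈ R := by simpa [extR, List.Chain'] using hγ.2
      have h2 : (a, c) ∉ R := by simpa [extR, List.Chain'] using hB.2
      exact h2 hac

private lemma option_mem_unique {α : Type} {o : Option α} {a b : α}
    (h : o = some a) (hb : b ∈ o) : b = a := by
  rw [Option.mem_def, h] at hb
  exact (Option.some_inj.mp hb).symm

/-- Key lemma: a valid left extension of a `1`-cocycle forces the char-2 loop case. -/
private lemma keyL (hg : IsGentle Q R) (u : GB Q R 1) (c : Q.A)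
    (hc1 : u.val.1 = (Q.src c, [c]))
    (hcoc : dLin k Q R 1 (Finsupp.single u (1 : k)) = 0)
    {b : Q.A} (h : GBmem Q R (1 + 1) (extL Q b u.val.1, extL Q b u.val.2)) :
    ringChar k = 2 ∧ ∃ c' : Q.A, Q.src c' = Q.tgt c' ∧ (c', c') ∈ R ∧
      u.val = ((Q.src c', [c']), (Q.src c', [])) := by
  rw [dLin_single] at hcoc
  have he : (dB k Q R 1 u) (⟨(extL Q b u.val.1, extL Q b u.val.2), h⟩ : GB Q R (1 + 1)) = 0 := by
    rw [hcoc]; rfl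
  rw [dB_def, Finsupp.sub_apply, Finsupp.smul_apply] at he
  have huniqL : ∀ b' (h' : GBmem Q R (1 + 1) (extL Q b' u.val.1, extL Q b' u.val.2)),
      (⟨(extL Q b' u.val.1, extL Q b' u.val.2), h'⟩ : GB Q R (1 + 1)) =
        ⟨(extL Q b u.val.1, extL Q b u.val.2), h⟩ → b' = b := by
    intro b' h' hh
    have h3 : u.val.1.2 ++ [b'] = u.val.1.2 ++ [b] :=
      congrArg (fun z : GB Q R (1 + 1) => z.val.1.2) hh
    simpa using List.append_cancel_left h3
  rw [sum_dite_single_apply_eq (k := k) _ _ b h rfl huniqL] at he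
  by_cases hov : ∃ a, (Q.tgt a = psrc Q u.val.1 ∧
      GBmem Q R (1 + 1) (extR Q a u.val.1, extR Q a u.val.2)) ∧
      (extR Q a u.val.1, extR Q a u.val.2) = (extL Q b u.val.1, extL Q b u.val.2)
  · obtain ⟨a, ha, hpair⟩ := hov
    have hsnd : a :: u.val.1.2 = u.val.1.2 ++ [b] :=
      congrArg (fun z : PathDat Q × PathDat Q => z.1.2) hpair
    rw [hc1] at hsnd
    simp only [List.cons_append, List.nil_append, List.cons.injEq, and_true] at hsnd
    obtain ⟨ha1, hb1⟩ := hsnd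
    subst ha1; subst hb1
    have huniqR : ∀ a' (h' : Q.tgt a' = psrc Q u.val.1 ∧
        GBmem Q R (1 + 1) (extR Q a' u.val.1, extR Q a' u.val.2)),
        (⟨(extR Q a' u.val.1, extR Q a' u.val.2), h'.2⟩ : GB Q R (1 + 1)) =
          ⟨(extL Q a u.val.1, extL Q a u.val.2), h⟩ → a' = a := by
      intro a' h' hh
      have h3 : a' :: u.val.1.2 = u.val.1.2 ++ [a] :=
        congrArg (fun z : GB Q R (1 + 1) => z.val.1.2) hh
      rw [hc1] at h3
      simp only [List.cons_append, List.nil_append, List.cons.injEq, and_true] at h3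
      exact h3
    rw [sum_dite_single_apply_eq (k := k) _ _ a ha (Subtype.ext hpair) huniqR] at he
    simp only [pow_one, smul_eq_mul, mul_one, sub_neg_eq_add, neg_one_mul, sub_eq_add_neg,
      neg_neg] at he
    rw [one_add_one_eq_two] at he
    have hch2 : ringChar k = 2 := by
      have hd : ringChar k ∣ 2 := ringChar.dvd (by exact_mod_cast he)
      rcases (Nat.dvd_prime Nat.prime_two).mp hd with h1 | h1
      · exact absurd h1 CharP.ringChar_ne_one
      · exact h1
    have hγ := ha.2.1
    rw [hc1] at hγ
    have hloop : Q.tgt a = Q.src a := by simpa [extR, List.Chain'] using hγ.1.1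
    have hcc : (a, a) ∈ R := by simpa [extR, List.Chain'] using hγ.2
    have hl2 : a :: u.val.2.2 = u.val.2.2 ++ [a] :=
      congrArg (fun z : PathDat Q × PathDat Q => z.2.2) hpair
    have hα1 : u.val.2.1 = Q.src a := by
      have h6 := u.prop.2.2.2.1
      rw [hc1] at h6
      exact h6.symm
    rcases hu2 : u.val.2.2 with - | ⟨x, t⟩
    · refine ⟨hch2, a, hloop.symm, hcc, ?_⟩
      have h5 : u.val.2 = (Q.src a, []) := by rw [← hα1, ← hu2]
      rw [← hc1, ← h5]
    · exfalso
      rw [hu2] at hl2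
      have hga : (x :: t).getLast? = some a := by
        have h6 := congrArg List.getLast? hl2
        rw [List.getLast?_concat, List.getLast?_cons_cons] at h6
        exact h6
      have hB2 := h.2.2.1.2
      rw [show (extL Q a u.val.2).2 = u.val.2.2 ++ [a] from rfl, hu2,
        chain'_concat_iff] at hB2
      exact hB2.2 a hga hcc
  · have hz : (∑ x : Q.A, if h' : Q.tgt x = psrc Q u.val.1 ∧
        GBmem Q R (1 + 1) (extR Q x u.val.1, extR Q x u.val.2) then
          Finsupp.single (⟨(extR Q x u.val.1, extR Q x u.val.2), h'.2⟩ : GB Q R (1 + 1)) (1 : k)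
        else 0) (⟨(extL Q b u.val.1, extL Q b u.val.2), h⟩ : GB Q R (1 + 1)) = 0 := by
      refine sum_dite_single_apply_eq_zero (k := k) _ _ ?_
      intro a h' heq
      exact hov ⟨a, h', congrArg Subtype.val heq⟩
    rw [hz] at he
    simp at he

/-- Key lemma: a valid right extension of a `1`-cocycle forces the char-2 loop case. -/
private lemma keyR (hg : IsGentle Q R) (u : GB Q R 1) (c : Q.A)
    (hc1 : u.val.1 = (Q.src c, [c]))
    (hcoc : dLin k Q R 1 (Finsupp.single u (1 : k)) = 0)
    {a : Q.A} (h : Q.tgt a = psrc Q u.val.1 ∧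
      GBmem Q R (1 + 1) (extR Q a u.val.1, extR Q a u.val.2)) :
    ringChar k = 2 ∧ ∃ c' : Q.A, Q.src c' = Q.tgt c' ∧ (c', c') ∈ R ∧
      u.val = ((Q.src c', [c']), (Q.src c', [])) := by
  rw [dLin_single] at hcoc
  have he : (dB k Q R 1 u) (⟨(extR Q a u.val.1, extR Q a u.val.2), h.2⟩ : GB Q R (1 + 1)) = 0 := by
    rw [hcoc]; rfl
  rw [dB_def, Finsupp.sub_apply, Finsupp.smul_apply] at he
  have huniqR : ∀ a' (h' : Q.tgt a' = psrc Q u.val.1 ∧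
      GBmem Q R (1 + 1) (extR Q a' u.val.1, extR Q a' u.val.2)),
      (⟨(extR Q a' u.val.1, extR Q a' u.val.2), h'.2⟩ : GB Q R (1 + 1)) =
        ⟨(extR Q a u.val.1, extR Q a u.val.2), h.2⟩ → a' = a := by
    intro a' h' hh
    have h3 : a' :: u.val.1.2 = a :: u.val.1.2 :=
      congrArg (fun z : GB Q R (1 + 1) => z.val.1.2) hh
    simpa using h3
  rw [sum_dite_single_apply_eq (k := k) _ _ a h rfl huniqR] at he
  by_cases hov : ∃ b, GBmem Q R (1 + 1) (extL Q b u.val.1, extL Q b u.val.2) ∧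
      (extL Q b u.val.1, extL Q b u.val.2) = (extR Q a u.val.1, extR Q a u.val.2)
  · obtain ⟨b, hb, hpair⟩ := hov
    have hsnd : u.val.1.2 ++ [b] = a :: u.val.1.2 :=
      congrArg (fun z : PathDat Q × PathDat Q => z.1.2) hpair
    rw [hc1] at hsnd
    simp only [List.cons_append, List.nil_append, List.cons.injEq, and_true] at hsnd
    obtain ⟨ha1, hb1⟩ := hsnd
    subst ha1; subst hb1
    have huniqL : ∀ b' (h' : GBmem Q R (1 + 1) (extL Q b' u.val.1, extL Q b' u.val.2)),
        (⟨(extL Q b' u.val.1, extL Q b' u.val.2), h'⟩ : GB Q R (1 + 1)) =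
          ⟨(extR Q b u.val.1, extR Q b u.val.2), h.2⟩ → b' = b := by
      intro b' h' hh
      have h3 : u.val.1.2 ++ [b'] = b :: u.val.1.2 :=
        congrArg (fun z : GB Q R (1 + 1) => z.val.1.2) hh
      rw [hc1] at h3
      simp only [List.cons_append, List.nil_append, List.cons.injEq, and_true] at h3
      exact h3.2
    rw [sum_dite_single_apply_eq (k := k) _ _ b hb (Subtype.ext hpair) huniqL] at he
    simp only [pow_one, smul_eq_mul, mul_one, sub_neg_eq_add, neg_one_mul, sub_eq_add_neg,
      neg_neg] at he
    rw [one_add_one_eq_two] at he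
    have hch2 : ringChar k = 2 := by
      have hd : ringChar k ∣ 2 := ringChar.dvd (by exact_mod_cast he)
      rcases (Nat.dvd_prime Nat.prime_two).mp hd with h1 | h1
      · exact absurd h1 CharP.ringChar_ne_one
      · exact h1
    have hγ := h.2.1
    rw [hc1] at hγ
    have hloop : Q.tgt b = Q.src b := by simpa [extR, List.Chain'] using hγ.1.1
    have hcc : (b, b) ∈ R := by simpa [extR, List.Chain'] using hγ.2
    have hl2 : u.val.2.2 ++ [b] = b :: u.val.2.2 :=
      congrArg (fun z : PathDat Q × PathDat Q => z.2.2) hpair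
    have hα1 : u.val.2.1 = Q.src b := by
      have h6 := u.prop.2.2.2.1
      rw [hc1] at h6
      exact h6.symm
    rcases hu2 : u.val.2.2 with - | ⟨x, t⟩
    · refine ⟨hch2, b, hloop.symm, hcc, ?_⟩
      have h5 : u.val.2 = (Q.src b, []) := by rw [← hα1, ← hu2]
      rw [← hc1, ← h5]
    · exfalso
      rw [hu2] at hl2
      have hga : (x :: t).getLast? = some b := by
        have h6 := congrArg List.getLast? hl2.symm
        rw [List.getLast?_concat, List.getLast?_cons_cons] at h6
        exact h6
      have hB2 := hb.2.2.1.2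
      rw [show (extL Q b u.val.2).2 = u.val.2.2 ++ [b] from rfl, hu2,
        chain'_concat_iff] at hB2
      exact hB2.2 b hga hcc
  · have hz : (∑ x : Q.A, if h' : GBmem Q R (1 + 1) (extL Q x u.val.1, extL Q x u.val.2) then
          Finsupp.single (⟨(extL Q x u.val.1, extL Q x u.val.2), h'⟩ : GB Q R (1 + 1)) (1 : k)
        else 0) (⟨(extR Q a u.val.1, extR Q a u.val.2), h.2⟩ : GB Q R (1 + 1)) = 0 := by
      refine sum_dite_single_apply_eq_zero (k := k) _ _ ?_
      intro b h' heq
      exact hov ⟨b, h', congrArg Subtype.val heq⟩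
    rw [hz] at he
    simp at he

private lemma gb_ext_L {c b : Q.A} {l : List Q.A}
    (hu : GBmem Q R 1 ((Q.src c, [c]), (Q.src c, l)))
    (hb : Q.tgt c = Q.src b) (hbR : (c, b) ∈ R)
    (hlb : ∀ x ∈ l.getLast?, (x, b) ∉ R) :
    GBmem Q R (1 + 1) (extL Q b (Q.src c, [c]), extL Q b (Q.src c, l)) := by
  obtain ⟨h1, h2, h3, h4⟩ := ufacts hu
  have hjunc : ∀ x ∈ l.getLast?, Q.tgt x = Q.src b := by
    intro x hx
    rw [← ptgt_eq_of_getLast? (v := Q.src c) hx, ← h4]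
    exact hb
  refine ⟨⟨⟨?_, ?_⟩, ?_⟩, rfl, ⟨⟨?_, ?_⟩, ?_⟩, rfl, ?_⟩
  · simpa [extL, List.Chain'] using hb
  · intro x hx; simp [extL] at hx; subst hx; rfl
  · simpa [extL, List.Chain'] using hbR
  · show List.Chain' _ (l ++ [b])
    rw [chain'_concat_iff]
    exact ⟨h1, hjunc⟩
  · intro x hx
    show Q.src x = Q.src c
    rcases l with - | ⟨y, t⟩
    · simp [extL] at hx
      subst hx
      rw [← hb]
      exact h4
    · rw [show (extL Q b (Q.src c, y :: t)).2 = (y :: t) ++ [b] from rfl,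
        List.head?_append_of_ne_nil _ (by simp)] at hx
      exact h2 x hx
  · show List.Chain' _ (l ++ [b])
    rw [chain'_concat_iff]
    exact ⟨h3, hlb⟩
  · show ptgt Q (Q.src c, [c] ++ [b]) = ptgt Q (Q.src c, l ++ [b])
    rw [ptgt_concat, ptgt_concat]

private lemma gb_ext_R {c a : Q.A} {l : List Q.A}
    (hu : GBmem Q R 1 ((Q.src c, [c]), (Q.src c, l)))
    (ha : Q.tgt a = Q.src c) (haR : (a, c) ∈ R)
    (hah : ∀ x ∈ l.head?, (a, x) ∉ R) :
    Q.tgt a = psrc Q (Q.src c, [c]) ∧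
      GBmem Q R (1 + 1) (extR Q a (Q.src c, [c]), extR Q a (Q.src c, l)) := by
  obtain ⟨h1, h2, h3, h4⟩ := ufacts hu
  refine ⟨ha, ⟨⟨?_, ?_⟩, ?_⟩, rfl, ⟨⟨?_, ?_⟩, ?_⟩, rfl, ?_⟩
  · simpa [extR, List.Chain'] using ha
  · intro x hx; simp [extR] at hx; subst hx; rfl
  · simpa [extR, List.Chain'] using haR
  · show List.Chain' _ (a :: l)
    rw [List.Chain', List.isChain_cons]
    refine ⟨fun y hy => ?_, h1⟩
    rw [h2 y hy, ← ha]
  · intro x hx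
    show Q.src x = Q.src a
    simp [extR] at hx
    subst hx; rfl
  · show List.Chain' _ (a :: l)
    rw [List.Chain', List.isChain_cons]
    exact ⟨hah, h3⟩
  · show ptgt Q (Q.src a, a :: [c]) = ptgt Q (Q.src a, a :: l)
    rcases l with - | ⟨y, t⟩
    · have e1 : ptgt Q (Q.src a, a :: [c]) = Q.tgt c := ptgt_eq_of_getLast? (by simp)
      have e2 : ptgt Q (Q.src a, [a]) = Q.tgt a := ptgt_single _ _
      rw [e1, e2, ha]
      exact h4
    · have e1 : ptgt Q (Q.src a, a :: [c]) = Q.tgt c := ptgt_eq_of_getLast? (by simp)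
      obtain ⟨z, hz⟩ : ∃ z, (y :: t).getLast? = some z :=
        ⟨(y :: t).getLast (by simp), List.getLast?_eq_getLast (by simp)⟩
      have e2 : ptgt Q (Q.src a, a :: y :: t) = Q.tgt z :=
        ptgt_eq_of_getLast? (by rw [List.getLast?_cons_cons]; exact hz)
      rw [e1, e2]
      rw [← ptgt_eq_of_getLast? (v := Q.src c) hz]
      exact h4

private lemma bex_last (hg : IsGentle Q R) {c : Q.A} {l : List Q.A}
    (hu : GBmem Q R 1 ((Q.src c, [c]), (Q.src c, l)))
    (hnL : ∀ b, ¬ GBmem Q R (1 + 1) (extL Q b (Q.src c, [c]), extL Q b (Q.src c, l)))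
    {b : Q.A} (hb : Q.tgt c = Q.src b) (hbR : (c, b) ∈ R) :
    l.getLast? = some c := by
  by_contra hne
  refine hnL b (gb_ext_L hu hb hbR ?_)
  intro x hx hxR
  have h4 := (ufacts hu).2.2.2
  have htx : Q.tgt x = Q.src b := by
    rw [← ptgt_eq_of_getLast? (v := Q.src c) hx, ← h4]
    exact hb
  have hxc : x = c := hg.uniqRelBefore b ⟨htx, hxR⟩ ⟨hb, hbR⟩
  exact hne (hxc ▸ hx)

private lemma aex_head (hg : IsGentle Q R) {c : Q.A} {l : List Q.A}
    (hu : GBmem Q R 1 ((Q.src c, [c]), (Q.src c, l)))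
    (hnR : ∀ a, ¬ (Q.tgt a = psrc Q (Q.src c, [c]) ∧
      GBmem Q R (1 + 1) (extR Q a (Q.src c, [c]), extR Q a (Q.src c, l))))
    {a : Q.A} (ha : Q.tgt a = Q.src c) (haR : (a, c) ∈ R) :
    l.head? = some c := by
  by_contra hne
  refine hnR a (gb_ext_R hu ha haR ?_)
  intro x hx hxR
  have hsx : Q.src x = Q.src c := (ufacts hu).2.1 x hx
  have hxc : x = c := hg.uniqRelAfter a ⟨by rw [hsx]; exact ha, hxR⟩ ⟨ha, haR⟩
  exact hne (hxc ▸ hx)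

private lemma gmax_of (c : Q.A)
    (hb : ∀ b, Q.tgt c = Q.src b → (c, b) ∈ R → False)
    (ha : ∀ a, Q.tgt a = Q.src c → (a, c) ∈ R → False) :
    GMax Q R (Q.src c, [c]) := by
  constructor
  · exact ⟨⟨by simp [List.Chain'], by intro x hx; simp at hx; subst hx; rfl⟩, by simp [List.Chain']⟩
  · rintro q hq ⟨s, t, hst⟩
    obtain ⟨⟨hcomp, -⟩, hrel⟩ := hq
    rw [← hst] at hcomp hrel
    rcases t with - | ⟨y, t'⟩
    · rcases s with - | ⟨z, s'⟩
      · simpa using hst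
      · exfalso
        rw [List.append_nil] at hcomp hrel
        rw [chain'_concat_iff] at hcomp hrel
        obtain ⟨w, hw⟩ : ∃ w, (z :: s').getLast? = some w :=
          ⟨(z :: s').getLast (by simp), List.getLast?_eq_getLast (by simp)⟩
        exact ha w (hcomp.2 w hw) (hrel.2 w hw)
    · exfalso
      rw [List.Chain', List.isChain_append] at hcomp hrel
      have hcy : Q.tgt c = Q.src y :=
        hcomp.2.2 c (by rw [Option.mem_def, List.getLast?_concat]) y rfl
      have hry : (c, y) ∈ R :=
        hrel.2.2 c (by rw [Option.mem_def, List.getLast?_concat]) y rfl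
      exact hb y hcy hry

/-- Case A: `α` ends with `c` but does not begin with `c`; then `u` is a coboundary. -/
private lemma caseA (hg : IsGentle Q R) (u : GB Q R 1) (c : Q.A) (l : List Q.A)
    (hval : u.val = ((Q.src c, [c]), (Q.src c, l)))
    (hlast : l.getLast? = some c) (hhead : l.head? ≠ some c)
    (hA : ∀ a, Q.tgt a = Q.src c → (a, c) ∈ R → l.head? = some c) :
    ∃ y : Coch k Q R 0, dLin k Q R 0 y = Finsupp.single u (1 : k) := by
  have hu : GBmem Q R 1 ((Q.src c, [c]), (Q.src c, l)) := hval ▸ u.prop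
  obtain ⟨h1, h2, h3, h4⟩ := ufacts hu
  set m := l.dropLast with hm
  have hml : m ++ [c] = l := dropLast_concat_getLast? hlast
  have hmne : m ≠ [] := by
    rintro h0
    rw [h0] at hml
    exact hhead (by rw [← hml]; rfl)
  obtain ⟨x0, hx0⟩ : ∃ x0, m.head? = some x0 := ⟨m.head hmne, List.head?_eq_head hmne⟩
  have hhx0 : l.head? = some x0 := by
    rw [← hml, List.head?_append_of_ne_nil _ hmne]; exact hx0
  obtain ⟨z0, hz0⟩ : ∃ z0, m.getLast? = some z0 :=
    ⟨m.getLast hmne, List.getLast?_eq_getLast hmne⟩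
  have hcomp := h1
  rw [← hml, chain'_concat_iff] at hcomp
  have hrel := h3
  rw [← hml, chain'_concat_iff] at hrel
  have hjz : Q.tgt z0 = Q.src c := hcomp.2 z0 hz0
  have hzc : (z0, c) ∉ R := hrel.2 z0 hz0
  have hsx0 : Q.src x0 = Q.src c := h2 x0 hhx0
  have hym : GBmem Q R 0 ((Q.src c, ([] : List Q.A)), (Q.src c, m)) := by
    refine ⟨⟨⟨by simp [List.Chain'], by simp⟩, by simp [List.Chain']⟩, rfl, ⟨⟨hcomp.1, ?_⟩, hrel.1⟩, rfl, ?_⟩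
    · intro x hx
      exact h2 x (by rw [← hml, List.head?_append_of_ne_nil _ hmne]; exact hx)
    · show ptgt Q (Q.src c, ([] : List Q.A)) = ptgt Q (Q.src c, m)
      rw [ptgt_eq_of_getLast? hz0]
      exact hjz.symm
  set y : GB Q R 0 := ⟨((Q.src c, []), (Q.src c, m)), hym⟩ with hy
  refine ⟨Finsupp.single y 1, ?_⟩
  rw [dLin_single, dB_def]
  have hnone : ∀ a : Q.A, ¬ (Q.tgt a = psrc Q y.val.1 ∧
      GBmem Q R (0 + 1) (extR Q a y.val.1, extR Q a y.val.2)) := by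
    rintro a ⟨hta, hmem⟩
    have hta' : Q.tgt a = Q.src c := hta
    obtain ⟨hγ, -, hB, -⟩ := hmem
    have hnr : (a, x0) ∉ R := by
      have h6 := hB.2
      rw [show (extR Q a y.val.2).2 = a :: m from rfl, List.Chain', List.isChain_cons] at h6
      exact h6.1 x0 hx0
    by_cases hac : (a, c) ∈ R
    · exact hhead (hA a hta' hac)
    · have haz : a = z0 := hg.uniqNotRelBefore c ⟨hta', hac⟩ ⟨hjz, hzc⟩
      have hx0c : c = x0 :=
        hg.uniqNotRelAfter z0 ⟨hjz, hzc⟩ ⟨by rw [hsx0]; exact hjz, haz ▸ hnr⟩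
      exact hhead (by rw [hhx0, hx0c])
  rw [sum_dite_single_eq_zero (k := k) _ hnone]
  have hpair : (extL Q c y.val.1, extL Q c y.val.2) = u.val := by
    rw [hval]
    show ((Q.src c, [c]), (Q.src c, m ++ [c])) = _
    rw [hml]
  have hub : GBmem Q R (0 + 1) (extL Q c y.val.1, extL Q c y.val.2) := by
    rw [hpair]; exact u.prop
  have huniq : ∀ b, GBmem Q R (0 + 1) (extL Q b y.val.1, extL Q b y.val.2) → b = c := by
    intro b hbmem
    obtain ⟨-, -, hB, -⟩ := hbmem
    have hcomp' := hB.1.1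
    rw [show (extL Q b y.val.2).2 = m ++ [b] from rfl, chain'_concat_iff] at hcomp'
    have hnr' := hB.2
    rw [show (extL Q b y.val.2).2 = m ++ [b] from rfl, chain'_concat_iff] at hnr'
    exact hg.uniqNotRelAfter z0 ⟨hcomp'.2 z0 hz0, hnr'.2 z0 hz0⟩ ⟨hjz, hzc⟩
  rw [sum_dite_single_eq (k := k) _ c hub huniq]
  simp only [pow_zero, one_smul, smul_zero, sub_zero]
  exact congrArg (fun z => Finsupp.single z (1 : k)) (Subtype.ext hpair)

/-- Case B: `α` begins with `c` but does not end with `c`; then `u` is a coboundary. -/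
private lemma caseB (hg : IsGentle Q R) (u : GB Q R 1) (c : Q.A) (l : List Q.A)
    (hval : u.val = ((Q.src c, [c]), (Q.src c, l)))
    (hhead : l.head? = some c) (hlast : l.getLast? ≠ some c)
    (hBx : ∀ b, Q.tgt c = Q.src b → (c, b) ∈ R → l.getLast? = some c) :
    ∃ y : Coch k Q R 0, dLin k Q R 0 y = Finsupp.single u (1 : k) := by
  have hu : GBmem Q R 1 ((Q.src c, [c]), (Q.src c, l)) := hval ▸ u.prop
  obtain ⟨h1, h2, h3, h4⟩ := ufacts hu
  set m := l.tail with hm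
  have hlc : l = c :: m := eq_cons_of_head? hhead
  have hmne : m ≠ [] := by
    rintro h0
    rw [h0] at hlc
    exact hlast (by rw [hlc]; rfl)
  obtain ⟨x0, hx0⟩ : ∃ x0, m.head? = some x0 := ⟨m.head hmne, List.head?_eq_head hmne⟩
  obtain ⟨z0, hz0⟩ : ∃ z0, m.getLast? = some z0 :=
    ⟨m.getLast hmne, List.getLast?_eq_getLast hmne⟩
  have hcomp := h1
  rw [hlc, List.Chain', List.isChain_cons] at hcomp
  have hrel := h3
  rw [hlc, List.Chain', List.isChain_cons] at hrel
  have hjx : Q.tgt c = Q.src x0 := hcomp.1 x0 hx0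
  have hrx : (c, x0) ∉ R := hrel.1 x0 hx0
  have hgl : l.getLast? = m.getLast? := by
    rw [hlc, eq_cons_of_head? hx0, List.getLast?_cons_cons, ← eq_cons_of_head? hx0]
  have htz : Q.tgt z0 = Q.tgt c := by
    rw [← ptgt_eq_of_getLast? (v := Q.src c) (l := l) (by rw [hgl]; exact hz0)]
    exact h4.symm
  have hym : GBmem Q R 0 ((Q.tgt c, ([] : List Q.A)), (Q.tgt c, m)) := by
    refine ⟨⟨⟨by simp [List.Chain'], by simp⟩, by simp [List.Chain']⟩, rfl, ⟨⟨hcomp.2, ?_⟩, hrel.2⟩, rfl, ?_⟩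
    · intro x hx
      have hxx0 : x = x0 := option_mem_unique hx0 hx
      subst hxx0
      exact hjx.symm
    · show ptgt Q (Q.tgt c, ([] : List Q.A)) = ptgt Q (Q.tgt c, m)
      rw [ptgt_eq_of_getLast? hz0]
      exact htz.symm
  set y : GB Q R 0 := ⟨((Q.tgt c, []), (Q.tgt c, m)), hym⟩ with hy
  refine ⟨-Finsupp.single y 1, ?_⟩
  rw [map_neg, dLin_single, dB_def]
  have hnoneL : ∀ b : Q.A, ¬ GBmem Q R (0 + 1) (extL Q b y.val.1, extL Q b y.val.2) := by
    intro b hbm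
    obtain ⟨hγ, -, hBm, -⟩ := hbm
    have hsb : Q.src b = Q.tgt c := hγ.1.2 b rfl
    have hcompb := hBm.1.1
    rw [show (extL Q b y.val.2).2 = m ++ [b] from rfl, chain'_concat_iff] at hcompb
    have hnrb := hBm.2
    rw [show (extL Q b y.val.2).2 = m ++ [b] from rfl, chain'_concat_iff] at hnrb
    have hjzb : Q.tgt z0 = Q.src b := hcompb.2 z0 hz0
    have hzb : (z0, b) ∉ R := hnrb.2 z0 hz0
    by_cases hcb : (c, b) ∈ R
    · exact hlast (hBx b hsb.symm hcb)
    · have hbx : b = x0 := hg.uniqNotRelAfter c ⟨hsb.symm, hcb⟩ ⟨hjx, hrx⟩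
      have hcz : c = z0 :=
        hg.uniqNotRelBefore x0 ⟨hjx, hrx⟩ ⟨by rw [← hbx]; exact hjzb, hbx ▸ hzb⟩
      exact hlast (by rw [hgl, hz0, ← hcz])
  rw [sum_dite_single_eq_zero (k := k) _ hnoneL]
  have hpair : (extR Q c y.val.1, extR Q c y.val.2) = u.val := by
    rw [hval]
    show ((Q.src c, [c]), (Q.src c, c :: m)) = _
    rw [← hlc]
  have hQ : Q.tgt c = psrc Q y.val.1 ∧
      GBmem Q R (0 + 1) (extR Q c y.val.1, extR Q c y.val.2) := by
    refine ⟨rfl, ?_⟩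
    rw [hpair]; exact u.prop
  have huniqR : ∀ a, (Q.tgt a = psrc Q y.val.1 ∧
      GBmem Q R (0 + 1) (extR Q a y.val.1, extR Q a y.val.2)) → a = c := by
    rintro a ⟨hta, hmem⟩
    obtain ⟨-, -, hB, -⟩ := hmem
    have hcompa := hB.1.1
    rw [show (extR Q a y.val.2).2 = a :: m from rfl, List.Chain', List.isChain_cons] at hcompa
    have hnra := hB.2
    rw [show (extR Q a y.val.2).2 = a :: m from rfl, List.Chain', List.isChain_cons] at hnra
    exact hg.uniqNotRelBefore x0 ⟨hcompa.1 x0 hx0, hnra.1 x0 hx0⟩ ⟨hjx, hrx⟩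
  rw [sum_dite_single_eq (k := k) _ c hQ huniqR]
  simp only [pow_zero, one_smul, zero_sub, neg_neg]
  exact congrArg (fun z => Finsupp.single z (1 : k)) (Subtype.ext hpair)

/-- Case C: `α` begins and ends with `c`; then `u` is of the cocomplete-cycle form. -/
private lemma caseC (u : GB Q R 1) (c : Q.A) (l : List Q.A)
    (hval : u.val = ((Q.src c, [c]), (Q.src c, l)))
    (hh : l.head? = some c) (hl : l.getLast? = some c) (hlc : l ≠ [c]) :
    Cocomplete Q R (Q.src c, l.dropLast) ∧ (l.dropLast).head? = some c ∧
      u.val = ((Q.src c, [c]),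
        ((Q.src c, l.dropLast).1, (Q.src c, l.dropLast).2 ++ [c])) := by
  have hu : GBmem Q R 1 ((Q.src c, [c]), (Q.src c, l)) := hval ▸ u.prop
  obtain ⟨h1, h2, h3, h4⟩ := ufacts hu
  set m := l.dropLast with hm
  have hml : m ++ [c] = l := dropLast_concat_getLast? hl
  have hmne : m ≠ [] := by
    rintro h0
    rw [h0] at hml
    exact hlc hml.symm
  have hhm : m.head? = some c := by
    have h5 := hh
    rw [← hml, List.head?_append_of_ne_nil _ hmne] at h5
    exact h5
  obtain ⟨z0, hz0⟩ : ∃ z0, m.getLast? = some z0 :=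
    ⟨m.getLast hmne, List.getLast?_eq_getLast hmne⟩
  have hcomp := h1
  rw [← hml, chain'_concat_iff] at hcomp
  have hrel := h3
  rw [← hml, chain'_concat_iff] at hrel
  have hjz : Q.tgt z0 = Q.src c := hcomp.2 z0 hz0
  have hzc : (z0, c) ∉ R := hrel.2 z0 hz0
  have hheadm : ∀ x ∈ m.head?, Q.src x = Q.src c := by
    intro x hx
    have hxc : x = c := option_mem_unique hhm hx
    subst hxc; rfl
  have hP2 : powP Q (Q.src c, m) 2 = (Q.src c, m ++ m) := by
    show (Q.src c, m ++ (m ++ [])) = _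
    rw [List.append_nil]
  refine ⟨⟨⟨⟨hcomp.1, hheadm⟩, hmne, ?_⟩, ?_⟩, hhm, ?_⟩
  · show psrc Q (Q.src c, m) = ptgt Q (Q.src c, m)
    rw [ptgt_eq_of_getLast? hz0]
    exact hjz.symm
  · rw [hP2]
    refine ⟨⟨?_, ?_⟩, ?_⟩
    · rw [List.Chain', List.isChain_append]
      refine ⟨hcomp.1, hcomp.1, ?_⟩
      intro x hx y hy
      rw [option_mem_unique hz0 hx, option_mem_unique hhm hy]
      exact hjz
    · intro x hx
      rw [List.head?_append_of_ne_nil _ hmne] at hx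
      exact hheadm x hx
    · rw [List.Chain', List.isChain_append]
      refine ⟨hrel.1, hrel.1, ?_⟩
      intro x hx y hy
      rw [option_mem_unique hz0 hx, option_mem_unique hhm hy]
      exact hzc
  · rw [hval]
    show _ = ((Q.src c, [c]), (Q.src c, m ++ [c]))
    rw [hml]

end Stmt3Aux

/-- Let `(Q, R)` be a gentle presentation and `u ∈ Γ₁ ∥ B`.
If `u` is a cocycle and not a coboundary, then one of the four alternatives
holds: (i) `char k = 2` and `u = (b, s(b))` for a loop `b` with `b² ∈ R`;
(ii) `u = (c, α)` with `c` a `Γ`-maximal arrow and `α ∈ B` neither beginning nor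
ending with `c`; (iii) `u = (c, cδ)` with `δ` a cocomplete cycle starting with
`c`; (iv) `u = (c, c)` for an arrow `c`. Conversely each alternative implies
that `u` is a cocycle. -/
theorem rank_one_one_cocycles (k : Type) [Field k] (Q : Quiv) (R : Set (Q.A × Q.A))
    (hg : IsGentle Q R) (u : GB Q R 1) :
    ((dLin k Q R 1 (Finsupp.single u (1 : k)) = 0 ∧
        ¬∃ y : Coch k Q R 0, dLin k Q R 0 y = Finsupp.single u (1 : k)) →
      RankOneAlternatives k Q R u) ∧
    (RankOneAlternatives k Q R u → dLin k Q R 1 (Finsupp.single u (1 : k)) = 0) := by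
  constructor
  · rintro ⟨hcoc, hncob⟩
    obtain ⟨c, hc⟩ : ∃ c, u.val.1.2 = [c] := List.length_eq_one_iff.mp u.prop.2.1
    have hsrc : u.val.1.1 = Q.src c := (u.prop.1.1.2 c (by rw [hc]; rfl)).symm
    have hc1 : u.val.1 = (Q.src c, [c]) := by rw [← hsrc, ← hc]
    have hα1 : u.val.2.1 = Q.src c := by
      have h6 := u.prop.2.2.2.1
      rw [hc1] at h6
      exact h6.symm
    set l := u.val.2.2 with hldef
    have hval : u.val = ((Q.src c, [c]), (Q.src c, l)) := by
      rw [← hc1, ← hα1]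
    by_cases hL : ∃ b, GBmem Q R (1 + 1) (extL Q b u.val.1, extL Q b u.val.2)
    · obtain ⟨b, hb⟩ := hL
      obtain ⟨hch, c', h5, h6, h7⟩ := keyL hg u c hc1 hcoc hb
      exact Or.inl ⟨hch, c', h5, h6, h7⟩
    by_cases hRv : ∃ a, Q.tgt a = psrc Q u.val.1 ∧
        GBmem Q R (1 + 1) (extR Q a u.val.1, extR Q a u.val.2)
    · obtain ⟨a, ha⟩ := hRv
      obtain ⟨hch, c', h5, h6, h7⟩ := keyR hg u c hc1 hcoc ha
      exact Or.inl ⟨hch, c', h5, h6, h7⟩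
    have hu : GBmem Q R 1 ((Q.src c, [c]), (Q.src c, l)) := hval ▸ u.prop
    have hnL : ∀ b, ¬ GBmem Q R (1 + 1) (extL Q b (Q.src c, [c]), extL Q b (Q.src c, l)) := by
      intro b hbm
      exact hL ⟨b, by rw [hval]; exact hbm⟩
    have hnR : ∀ a, ¬ (Q.tgt a = psrc Q (Q.src c, [c]) ∧
        GBmem Q R (1 + 1) (extR Q a (Q.src c, [c]), extR Q a (Q.src c, l))) := by
      intro a ham
      exact hRv ⟨a, by rw [hval]; exact ham⟩
    have hBex : ∀ b, Q.tgt c = Q.src b → (c, b) ∈ R → l.getLast? = some c :=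
      fun b hb1 hb2 => bex_last hg hu hnL hb1 hb2
    have hAex : ∀ a, Q.tgt a = Q.src c → (a, c) ∈ R → l.head? = some c :=
      fun a ha1 ha2 => aex_head hg hu hnR ha1 ha2
    by_cases hh : l.head? = some c
    · by_cases hl : l.getLast? = some c
      · by_cases hlc : l = [c]
        · refine Or.inr (Or.inr (Or.inr ⟨c, ?_⟩))
          rw [hval, hlc]
        · obtain ⟨hco, hhd, hvv⟩ := caseC u c l hval hh hl hlc
          exact Or.inr (Or.inr (Or.inl ⟨c, (Q.src c, l.dropLast), hco, hhd, hvv⟩))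
      · exact absurd (caseB hg u c l hval hh hl hBex) hncob
    · by_cases hl : l.getLast? = some c
      · exact absurd (caseA hg u c l hval hl hh hAex) hncob
      · refine Or.inr (Or.inl ⟨c, (Q.src c, l),
          gmax_of c (fun b hb1 hb2 => hl (hBex b hb1 hb2))
            (fun a ha1 ha2 => hh (hAex a ha1 ha2)), hh, hl, hval⟩)
  · exact converse_cocycle hg u

end GentleTT
end

section
/- Let (Q,R) be a gentle presentation, let C be a complete cycle of length m and period r with first arrow b, and set ⟨C⟩ = Σ_{i=0}^{r−1} (−1)^{im} (rot^i(C), s(rot^i(C))) ∈ k(Γ_m∥B). Then d^m(⟨C⟩) = (1 − (−1)^m)·(bC, b). In particular, ⟨C⟩ is an m-cocycle of the complex k(Γ∥B) if and only if m is even or the characteristic of k is 2. -/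
/-!
Common framework: quivers, paths (as a start vertex together with a list of
composable arrows, listed in order of traversal, so that the paper's path
`c_m ⋯ c_1` corresponds to the list `[c_1, …, c_m]`), gentle and quadratic
monomial presentations, the cochain complex `k(Γ ∥ B)` and the chain complex
`k(B ⊙ Γ)` of the paper.
-/

namespace GentleTT

/-! Auxiliary lemmas for Statement 5. -/

theorem rotP_concat (Q : Quiv) (v : Q.V) (t : List Q.A) (a : Q.A) :
    rotP Q (v, t ++ [a]) = (Q.src a, a :: t) := by
  simp [rotP, List.getLast?_concat]

theorem rotP_snd (Q : Quiv) (p : PathDat Q) :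
    (rotP Q p).2 = (p.2.reverse.rotate 1).reverse := by
  obtain ⟨v, l⟩ := p
  induction l using List.reverseRecOn with
  | nil => simp [rotP]
  | append_singleton t a _ =>
      rw [rotP_concat]
      simp [List.rotate_cons_succ]

theorem rotI_snd (Q : Quiv) (p : PathDat Q) (i : ℕ) :
    (rotI Q i p).2 = (p.2.reverse.rotate i).reverse := by
  induction i with
  | zero => simp [rotI]
  | succ n ih =>
      rw [rotI, Function.iterate_succ_apply', ← rotI, rotP_snd, ih]
      simp [List.rotate_rotate]

theorem chain'_doubled_rot {α : Type} {r : α → α → Prop} {t : List α} {a : α}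
    (h : ((t ++ [a]) ++ (t ++ [a])).Chain' r) :
    ((a :: t) ++ (a :: t)).Chain' r := by
  have h3 : ((t ++ [a]) ++ ((t ++ [a]) ++ (t ++ [a]))).Chain' r := by
    refine List.isChain_append.mpr ?_
    refine ⟨h.prefix (List.prefix_append _ _), h, ?_⟩
    have j := (List.isChain_append.mp h).2.2
    intro x hx y hy
    refine j x hx y ?_
    rwa [List.head?_append_of_ne_nil _ (by simp)] at hy
  refine h3.infix ⟨t, [a], ?_⟩
  simp

/-- The invariant carried around: a complete cycle of length `m`, encoded via
chains on the doubled arrow list. -/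
def PP (Q : Quiv) (R : Set (Q.A × Q.A)) (m : ℕ) (p : PathDat Q) : Prop :=
  p.2 ≠ [] ∧ p.2.length = m ∧ (∀ a ∈ p.2.head?, Q.src a = p.1) ∧
  (p.2 ++ p.2).Chain' (fun a b => Q.tgt a = Q.src b) ∧
  (p.2 ++ p.2).Chain' (fun a b => (a, b) ∈ R)

theorem PP_rot {Q : Quiv} {R : Set (Q.A × Q.A)} {m : ℕ} {p : PathDat Q}
    (hp : PP Q R m p) : PP Q R m (rotP Q p) := by
  obtain ⟨hne, hlen, hhd, hc, hr⟩ := hp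
  obtain ⟨t, a, hta⟩ := (List.eq_nil_or_concat p.2).resolve_left hne
  rw [List.concat_eq_append] at hta
  have hrot : rotP Q p = (Q.src a, a :: t) := by
    rw [show p = (p.1, t ++ [a]) from Prod.ext rfl hta, rotP_concat]
  rw [hta] at hlen hc hr
  rw [hrot]
  refine ⟨by simp, by simpa using hlen, by simp, ?_, ?_⟩
  · exact chain'_doubled_rot hc
  · exact chain'_doubled_rot hr

theorem PP_rotI {Q : Quiv} {R : Set (Q.A × Q.A)} {m : ℕ} {p : PathDat Q}
    (hp : PP Q R m p) (i : ℕ) : PP Q R m (rotI Q i p) := by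
  induction i with
  | zero => exact hp
  | succ n ih => rw [rotI, Function.iterate_succ_apply', ← rotI]; exact PP_rot ih

theorem PP_of_complete {Q : Quiv} {R : Set (Q.A × Q.A)} {m : ℕ} {C : PathDat Q}
    (hC : Complete Q R C) (hm : plen Q C = m) : PP Q R m C := by
  obtain ⟨⟨hok, hne, hcyc⟩, hOk2, hrel2⟩ := hC
  have hpow : (powP Q C 2).2 = C.2 ++ C.2 := by simp [powP, powL]
  refine ⟨hne, hm, hok.2, ?_, ?_⟩
  · have := hOk2.1; rwa [hpow] at this
  · rwa [hpow] at hrel2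

/-- Helpers derived from `PP`. -/
theorem PP.head_ex {Q : Quiv} {R : Set (Q.A × Q.A)} {m : ℕ} {p : PathDat Q}
    (hp : PP Q R m p) : ∃ h, p.2.head? = some h :=
  ⟨p.2.head hp.1, List.head?_eq_head hp.1⟩

theorem cons_tail_of_head? {α : Type} {l : List α} {h : α} (hh : l.head? = some h) :
    h :: l.tail = l := by
  cases l <;> simp_all

theorem take_one_of_head? {α : Type} {l : List α} {h : α} (hh : l.head? = some h) :
    l.take 1 = [h] := by
  cases l <;> simp_all

section Facts
variable {Q : Quiv} {R : Set (Q.A × Q.A)} {m : ℕ} {p : PathDat Q}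

theorem PP.elmem (hp : PP Q R m p) {h : Q.A} (hh : p.2.head? = some h) :
    GBmem Q R (m + 1) ((p.1, p.2 ++ [h]), (p.1, [h])) := by
  obtain ⟨hne, hlen, hhd, hc, hr⟩ := hp
  have hsrc : Q.src h = p.1 := hhd h hh
  have hpre : p.2 ++ [h] <+: p.2 ++ p.2 :=
    ⟨p.2.tail, by rw [List.append_assoc]; congr 1; exact cons_tail_of_head? hh⟩
  refine ⟨⟨⟨hc.prefix hpre, ?_⟩, hr.prefix hpre⟩, ?_, ⟨⟨List.isChain_singleton _, ?_⟩,
    List.isChain_singleton _⟩, rfl, ?_⟩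
  · intro x hx
    rw [List.head?_append_of_ne_nil _ hne, hh] at hx
    cases hx; exact hsrc
  · simp [plen, hlen]
  · intro x hx; cases hx; exact hsrc
  · show ptgt Q _ = ptgt Q _
    simp [ptgt, List.getLast?_concat]

theorem PP.ermem (hp : PP Q R m p) {t : List Q.A} {a : Q.A} (hta : p.2 = t ++ [a]) :
    GBmem Q R (m + 1) ((Q.src a, a :: p.2), (Q.src a, [a])) := by
  obtain ⟨hne, hlen, hhd, hc, hr⟩ := hp
  have hsuf : a :: p.2 <:+ p.2 ++ p.2 := ⟨t, by rw [hta]; simp⟩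
  have hl2 : (a :: p.2).getLast? = some a := by
    rw [hta, show a :: (t ++ [a]) = (a :: t) ++ [a] by simp, List.getLast?_concat]
  refine ⟨⟨⟨hc.suffix hsuf, ?_⟩, hr.suffix hsuf⟩, ?_, ⟨⟨List.isChain_singleton _, ?_⟩,
    List.isChain_singleton _⟩, rfl, ?_⟩
  · intro x hx; cases hx; rfl
  · simp [plen, hlen]
  · intro x hx; cases hx; rfl
  · show ptgt Q _ = ptgt Q _
    simp [ptgt, hl2]

theorem key (k : Type) [Field k] (hg : IsGentle Q R) (hp : PP Q R m p) :
    dLin k Q R m (bv k Q R m (p, (p.1, []))) =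
      bv k Q R (m + 1) ((p.1, p.2 ++ p.2.take 1), (p.1, p.2.take 1)) -
      ((-1 : k) ^ m) • bv k Q R (m + 1)
        (((rotP Q p).1, (rotP Q p).2 ++ (rotP Q p).2.take 1),
         ((rotP Q p).1, (rotP Q p).2.take 1)) := by
  obtain ⟨hne, hlen, hhd, hc, hr⟩ := hp
  obtain ⟨t, a, hta⟩ := (List.eq_nil_or_concat p.2).resolve_left hne
  rw [List.concat_eq_append] at hta
  obtain ⟨h, hh⟩ : ∃ h, p.2.head? = some h := ⟨p.2.head hne, List.head?_eq_head hne⟩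
  have hlast : p.2.getLast? = some a := by rw [hta]; exact List.getLast?_concat
  have jc : Q.tgt a = Q.src h := (List.isChain_append.mp hc).2.2 a hlast h hh
  have jr : (a, h) ∈ R := (List.isChain_append.mp hr).2.2 a hlast h hh
  have cc : p.2.Chain' (fun x y => Q.tgt x = Q.src y) := hc.prefix (List.prefix_append _ _)
  have cr : p.2.Chain' (fun x y => (x, y) ∈ R) := hr.prefix (List.prefix_append _ _)
  have hsrc : Q.src h = p.1 := hhd h hh
  have hptgt : ptgt Q p = p.1 := by rw [ptgt, hlast]; simpa [jc] using hsrc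
  have hrot : rotP Q p = (Q.src a, a :: t) := by
    rw [show p = (p.1, t ++ [a]) from Prod.ext rfl hta, rotP_concat]
  have hp' : PP Q R m p := ⟨hne, hlen, hhd, hc, hr⟩
  have hbase : GBmem Q R m (p, (p.1, [])) := by
    refine ⟨⟨⟨cc, hhd⟩, cr⟩, hlen, ⟨⟨List.isChain_nil, ?_⟩, List.isChain_nil⟩, rfl, ?_⟩
    · intro x hx; simp at hx
    · show ptgt Q p = ptgt Q (p.1, [])
      rw [hptgt]; simp [ptgt]
  rw [bv, dif_pos hbase, dLin, Finsupp.linearCombination_single, one_smul, dB]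
  rw [take_one_of_head? hh, hrot]
  have htake : (a :: t).take 1 = [a] := by simp
  rw [htake]
  have hcons : (a :: t) ++ [a] = a :: p.2 := by rw [hta]; simp
  rw [hcons]
  congr 1
  · -- first sum
    rw [bv, dif_pos (hp'.elmem hh)]
    refine Finset.sum_eq_single_of_mem h (Finset.mem_univ h) ?_ |>.trans ?_
    · intro b' _ hbh
      rw [dif_neg]
      intro hG
      refine hbh (hg.uniqRelAfter a ?_ ⟨jc, jr⟩)
      have hcomp : Q.tgt a = Q.src b' :=
        (List.isChain_append.mp hG.1.1.1).2.2 a hlast b' rfl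
      have hrel : (a, b') ∈ R := (List.isChain_append.mp hG.1.2).2.2 a hlast b' rfl
      exact ⟨hcomp, hrel⟩
    · have hmem : GBmem Q R (m + 1) (extL Q h p, extL Q h (p.1, [])) := hp'.elmem hh
      rw [dif_pos hmem]
      rfl
  · congr 1
    rw [bv, dif_pos (hp'.ermem hta)]
    refine Finset.sum_eq_single_of_mem a (Finset.mem_univ a) ?_ |>.trans ?_
    · intro a' _ hba
      rw [dif_neg]
      rintro ⟨htgt', hG⟩
      refine hba (hg.uniqRelBefore h ?_ ⟨jc, jr⟩)
      have hch : (a' :: p.2).Chain' (fun x y => Q.tgt x = Q.src y) := hG.1.1.1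
      have hchr : (a' :: p.2).Chain' (fun x y => (x, y) ∈ R) := hG.1.2
      rw [← cons_tail_of_head? hh] at hch hchr
      exact ⟨(List.isChain_cons_cons.mp hch).1, (List.isChain_cons_cons.mp hchr).1⟩
    · have hmem : Q.tgt a = psrc Q p ∧
          GBmem Q R (m + 1) (extR Q a p, extR Q a (p.1, [])) := by
        constructor
        · show Q.tgt a = p.1; rw [jc, hsrc]
        · exact hp'.ermem hta
      rw [dif_pos hmem]
      rfl

end Facts

/-- For a gentle presentation `(Q, R)` and a complete cycle `C`
of length `m` with first arrow `b`, the cochain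
`⟨C⟩ = Σ_{i=0}^{r-1} (-1)^{i m} (rot^i C, s(rot^i C))` satisfies
`d^m ⟨C⟩ = (1 - (-1)^m) • (bC, b)`; in particular `⟨C⟩` is a cocycle if and
only if `m` is even or `char k = 2`. -/
theorem d_of_complete_cycle_cochain (k : Type) [Field k] (Q : Quiv)
    (R : Set (Q.A × Q.A)) (hg : IsGentle Q R) (C : PathDat Q) (m : ℕ)
    (hC : Complete Q R C) (hm : plen Q C = m) (b : Q.A) (hb : C.2.head? = some b) :
    dLin k Q R m (cycG k Q R m C) =
      (1 - (-1 : k) ^ m) • bv k Q R (m + 1) ((C.1, C.2 ++ [b]), (Q.src b, [b])) ∧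
    (dLin k Q R m (cycG k Q R m C) = 0 ↔ (Even m ∨ ringChar k = 2)) := by
  have hP : PP Q R m C := PP_of_complete hC hm
  have hne : C.2 ≠ [] := hP.1
  have hsrcb : Q.src b = C.1 := hP.2.2.1 b hb
  have hm1 : 1 ≤ m := by
    rw [← hP.2.1]; exact List.length_pos_iff.mpr hne
  -- rotating `m` times is the identity
  have hrotm : rotI Q m C = C := by
    have hl : (rotI Q m C).2 = C.2 := by
      rw [rotI_snd, show m = C.2.reverse.length by simp [← hP.2.1], List.rotate_length,
        List.reverse_reverse]
    refine Prod.ext ?_ hl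
    have h1 := (PP_rotI hP m).2.2.1 b (by rw [hl]; exact hb)
    rw [← h1, hsrcb]
  -- the period
  set r := periodP Q C with hrdef
  have hrS : 1 ≤ r ∧ rotI Q r C = C := by
    have : r ∈ {i : ℕ | 1 ≤ i ∧ rotI Q i C = C} := Nat.sInf_mem ⟨m, hm1, hrotm⟩
    exact this
  obtain ⟨hr1, hrC⟩ := hrS
  have hmul : ∀ q : ℕ, rotI Q (q * r) C = C := by
    intro q
    induction q with
    | zero => rw [Nat.zero_mul]; rfl
    | succ n ih =>
        have : (n + 1) * r = r + n * r := by ring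
        rw [this, rotI, Function.iterate_add_apply]
        exact (congrArg ((rotP Q)^[r]) ih).trans hrC
  have hmod : rotI Q (m % r) C = C := by
    have h1 : rotI Q (m % r + m / r * r) C = C := by
      rw [Nat.mod_add_div']; exact hrotm
    rw [rotI, Function.iterate_add_apply] at h1
    rw [rotI]
    rwa [show (rotP Q)^[m / r * r] C = C from hmul (m / r)] at h1
  have hdvd : r ∣ m := by
    rcases Nat.eq_zero_or_pos (m % r) with h0 | h0
    · exact Nat.dvd_of_mod_eq_zero h0
    · exfalso
      have hle : r ≤ m % r := Nat.sInf_le ⟨h0, hmod⟩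
      exact absurd (Nat.mod_lt m hr1) (not_lt.mpr hle)
  have hpow : (-1 : k) ^ (r * m) = (-1 : k) ^ m := by
    rcases Nat.even_or_odd m with he | ho
    · rw [Even.neg_one_pow (he.mul_left r), Even.neg_one_pow he]
    · have hro : Odd r := by
        rcases Nat.even_or_odd r with hre | hro
        · exact absurd (even_iff_two_dvd.mpr (dvd_trans hre.two_dvd hdvd))
            (Nat.not_even_iff_odd.mpr ho)
        · exact hro
      rw [Odd.neg_one_pow (hro.mul ho), Odd.neg_one_pow ho]
  -- the telescoping computation
  set L : ℕ → Coch k Q R (m + 1) := fun i =>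
    bv k Q R (m + 1) (((rotI Q i C).1, (rotI Q i C).2 ++ (rotI Q i C).2.take 1),
      ((rotI Q i C).1, (rotI Q i C).2.take 1)) with hLdef
  have hstep : ∀ i : ℕ,
      dLin k Q R m (bv k Q R m ((rotI Q i C), (psrc Q (rotI Q i C), []))) =
        L i - ((-1 : k) ^ m) • L (i + 1) := by
    intro i
    have hri : rotI Q (i + 1) C = rotP Q (rotI Q i C) := by
      rw [rotI, Function.iterate_succ_apply']; rfl
    have := key k hg (PP_rotI hP i)
    rw [hLdef]
    simp only [hri]
    exact this
  have hmain : dLin k Q R m (cycG k Q R m C) = (1 - (-1 : k) ^ m) • L 0 := by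
    rw [cycG, map_sum]
    have hterm : ∀ i ∈ Finset.range r,
        dLin k Q R m (((-1 : k) ^ (i * m)) •
          bv k Q R m ((rotI Q i C), (psrc Q (rotI Q i C), []))) =
        ((-1 : k) ^ (i * m)) • L i - ((-1 : k) ^ ((i + 1) * m)) • L (i + 1) := by
      intro i _
      rw [map_smul, hstep i, smul_sub, smul_smul, ← pow_add]
      congr 2
      ring
    rw [Finset.sum_congr rfl hterm, Finset.sum_range_sub' (fun i => ((-1 : k) ^ (i * m)) • L i)]
    have hLr : L r = L 0 := by rw [hLdef]; simp only [hrC]; rfl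
    rw [hLr, zero_mul, pow_zero, one_smul, hpow, sub_smul, one_smul]
  have hL0 : L 0 = bv k Q R (m + 1) ((C.1, C.2 ++ [b]), (Q.src b, [b])) := by
    rw [hLdef]
    show bv k Q R (m+1) ((C.1, C.2 ++ C.2.take 1), (C.1, C.2.take 1)) = _
    rw [take_one_of_head? hb, hsrcb]
  have hfst : dLin k Q R m (cycG k Q R m C) =
      (1 - (-1 : k) ^ m) • bv k Q R (m + 1) ((C.1, C.2 ++ [b]), (Q.src b, [b])) := by
    rw [hmain, hL0]
  refine ⟨hfst, ?_⟩
  have hbvne : bv k Q R (m + 1) ((C.1, C.2 ++ [b]), (Q.src b, [b])) ≠ 0 := by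
    have hmem : GBmem Q R (m + 1) ((C.1, C.2 ++ [b]), (Q.src b, [b])) := by
      rw [hsrcb]; exact hP.elmem hb
    rw [bv, dif_pos hmem]
    simp [Finsupp.single_eq_zero]
  rw [hfst, smul_eq_zero, or_iff_left hbvne, sub_eq_zero]
  constructor
  · intro h1
    rcases Nat.even_or_odd m with he | ho
    · exact Or.inl he
    · right
      rw [Odd.neg_one_pow ho] at h1
      exact neg_one_eq_one_iff.mp h1.symm
  · rintro (he | hchar)
    · rw [Even.neg_one_pow he]
    · have : (-1 : k) = 1 := neg_one_eq_one_iff.mpr hchar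
      rw [this, one_pow]


end GentleTT
end
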